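/- arXiv:1902.02983 — 9 statements merged into one kernel-verified Lean document; each statement's English description precedes it below -/
import Mathlib

section
/- Let (T, μ) be a measure space, 1 ≤ q < p < ∞, and κ = pq/(p−q). Suppose M : L^p(T, μ) → L^q(F, λ) is a bounded linear operator (for some measure space (F, λ)) with the locality property that whenever f vanishes μ-a.e. on a measurable set A ⊆ T, the image Mf vanishes λ-a.e. on a corresponding measurable set F_A, where A ↦ F_A preserves disjointness and countable unions. Define Φ(A) = sup over nonzero f supported in A of (‖Mf‖_{L^q(F_A)} / ‖f‖_{L^p(A)})^κ. Then Φ is finitely additive on disjoint measurable sets: Φ(A₁ ∪ A₂) = Φ(A₁) + Φ(A₂) whenever A₁ ∩ A₂ = ∅. -/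
open MeasureTheory ENNReal


lemma aux_rpow_rpow_inv {q : ℝ} (hq : 0 < q) (x : ℝ≥0∞) : (x ^ (1/q)) ^ q = x := by
  rw [← ENNReal.rpow_mul, one_div, inv_mul_cancel₀ hq.ne', ENNReal.rpow_one]

lemma aux_rpow_inv_rpow {q : ℝ} (hq : 0 < q) (x : ℝ≥0∞) : (x ^ q) ^ (1/q) = x := by
  rw [← ENNReal.rpow_mul, one_div, mul_inv_cancel₀ hq.ne', ENNReal.rpow_one]

lemma aux_eLpNorm_rpow {α : Type*} [MeasurableSpace α] (ν : Measure α) {q : ℝ} (hq : 0 < q)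
    (g : α → ℝ) :
    eLpNorm g (ENNReal.ofReal q) ν ^ q = ∫⁻ x, (‖g x‖₊ : ℝ≥0∞) ^ q ∂ν := by
  have h1 : (ENNReal.ofReal q) ≠ 0 := by simp [hq.not_ge]
  rw [eLpNorm_eq_lintegral_rpow_enorm_toReal h1 ENNReal.ofReal_ne_top,
    ENNReal.toReal_ofReal hq.le, aux_rpow_rpow_inv hq]
  rfl

lemma aux_eLpNorm_add_measure {α : Type*} [MeasurableSpace α] (ν₁ ν₂ : Measure α) {q : ℝ}
    (hq : 0 < q) (g : α → ℝ) :
    eLpNorm g (ENNReal.ofReal q) (ν₁ + ν₂) ^ q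
      = eLpNorm g (ENNReal.ofReal q) ν₁ ^ q + eLpNorm g (ENNReal.ofReal q) ν₂ ^ q := by
  simp only [aux_eLpNorm_rpow _ hq, lintegral_add_measure]

lemma aux_eLpNorm_rpow_add_of_disjoint {α : Type*} [MeasurableSpace α] {ν : Measure α} {q : ℝ}
    (hq : 0 < q) {g₁ g₂ : α → ℝ} (hg₁ : AEMeasurable g₁ ν)
    (hdisj : ∀ᵐ x ∂ν, g₁ x = 0 ∨ g₂ x = 0) :
    eLpNorm (g₁ + g₂) (ENNReal.ofReal q) ν ^ q
      = eLpNorm g₁ (ENNReal.ofReal q) ν ^ q + eLpNorm g₂ (ENNReal.ofReal q) ν ^ q := by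
  simp only [aux_eLpNorm_rpow _ hq]
  change ∫⁻ x, ‖(g₁ + g₂) x‖ₑ ^ q ∂ν = ∫⁻ x, ‖g₁ x‖ₑ ^ q ∂ν + ∫⁻ x, ‖g₂ x‖ₑ ^ q ∂ν
  rw [← lintegral_add_left' (hg₁.enorm.pow_const q)]
  refine lintegral_congr_ae ?_
  filter_upwards [hdisj] with x hx
  rcases hx with h | h <;>
    simp [Pi.add_apply, h, ENNReal.zero_rpow_of_pos hq]

lemma aux_holder_two {r s : ℝ} (hrs : r.HolderConjugate s) (a b c d : ℝ≥0∞) :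
    a * b + c * d ≤ (a ^ r + c ^ r) ^ (1/r) * (b ^ s + d ^ s) ^ (1/s) := by
  have h := ENNReal.lintegral_mul_le_Lp_mul_Lq (Measure.count : Measure Bool) hrs
    (f := fun x => bif x then a else c) (g := fun x => bif x then b else d)
    (measurable_of_countable _).aemeasurable (measurable_of_countable _).aemeasurable
  simpa [MeasureTheory.lintegral_count, tsum_bool, add_comm] using h

lemma aux_iUnion_pair {β : Type*} (A B : Set β) :
    (⋃ i : ℕ, if i = 0 then A else if i = 1 then B else ∅) = A ∪ B := by
  ext x
  simp only [Set.mem_iUnion, Set.mem_union]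
  constructor
  · rintro ⟨i, hi⟩
    by_cases h0 : i = 0
    · subst h0; simp only [if_pos rfl] at hi; exact Or.inl hi
    by_cases h1 : i = 1
    · subst h1; simp only [if_neg h0, if_pos rfl] at hi; exact Or.inr hi
    · simp [h0, h1] at hi
  · rintro (h | h)
    · exact ⟨0, by simpa⟩
    · exact ⟨1, by simpa⟩


/-- The set function `Φ(A)` : supremum over nonzero `f ∈ L^p` supported in `A` of
`(‖Mf‖_{L^q(F_A)} / ‖f‖_{L^p(A)})^κ`. -/
noncomputable def PhiSet {T F : Type*} [MeasurableSpace T] [MeasurableSpace F]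
    (μ : Measure T) (lam : Measure F) (M : (T → ℝ) → (F → ℝ)) (FA : Set T → Set F)
    (p q κ : ℝ) (A : Set T) : ℝ≥0∞ :=
  ⨆ f : {f : T → ℝ // MemLp f (ENNReal.ofReal p) μ ∧ (∀ᵐ t ∂μ, t ∉ A → f t = 0) ∧
      eLpNorm f (ENNReal.ofReal p) μ ≠ 0},
    (eLpNorm (M f.1) (ENNReal.ofReal q) (lam.restrict (FA A)) /
      eLpNorm f.1 (ENNReal.ofReal p) μ) ^ κ

lemma le_PhiSet {T F : Type*} [MeasurableSpace T] [MeasurableSpace F]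
    (μ : Measure T) (lam : Measure F) (M : (T → ℝ) → (F → ℝ)) (FA : Set T → Set F)
    (p q κ : ℝ) (A : Set T) {f : T → ℝ} (hfm : MemLp f (ENNReal.ofReal p) μ)
    (hfs : ∀ᵐ t ∂μ, t ∉ A → f t = 0) (hfn : eLpNorm f (ENNReal.ofReal p) μ ≠ 0) :
    (eLpNorm (M f) (ENNReal.ofReal q) (lam.restrict (FA A)) /
      eLpNorm f (ENNReal.ofReal p) μ) ^ κ ≤ PhiSet μ lam M FA p q κ A :=
  le_iSup (fun g : {f : T → ℝ // MemLp f (ENNReal.ofReal p) μ ∧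
      (∀ᵐ t ∂μ, t ∉ A → f t = 0) ∧ eLpNorm f (ENNReal.ofReal p) μ ≠ 0} =>
    (eLpNorm (M g.1) (ENNReal.ofReal q) (lam.restrict (FA A)) /
      eLpNorm g.1 (ENNReal.ofReal p) μ) ^ κ) ⟨f, hfm, hfs, hfn⟩

/-- Finite additivity of the set function `Φ` associated with a bounded local operator
`M : L^p(T,μ) → L^q(F,λ)`, `1 ≤ q < p < ∞`, `κ = pq/(p-q)`. -/
theorem phiSet_finitely_additive
    {T F : Type*} [MeasurableSpace T] [MeasurableSpace F]
    (μ : Measure T) (lam : Measure F)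
    (p q κ : ℝ) (hq : 1 ≤ q) (hpq : q < p) (hκ : κ = p * q / (p - q))
    (M : (T → ℝ) → (F → ℝ))
    (hadd : ∀ f g, M (f + g) = M f + M g)
    (hsmul : ∀ (c : ℝ) f, M (c • f) = c • M f)
    (K : ℝ≥0∞) (hK : K ≠ ⊤)
    (hbdd : ∀ f : T → ℝ, MemLp f (ENNReal.ofReal p) μ →
      eLpNorm (M f) (ENNReal.ofReal q) lam ≤ K * eLpNorm f (ENNReal.ofReal p) μ)
    (FA : Set T → Set F)
    (hFAmeas : ∀ A, MeasurableSet A → MeasurableSet (FA A))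
    (hlocal : ∀ (f : T → ℝ) (A : Set T), MeasurableSet A →
      (∀ᵐ t ∂μ, t ∈ A → f t = 0) → (∀ᵐ x ∂lam, x ∈ FA A → M f x = 0))
    (hFAdisj : ∀ A B : Set T, Disjoint A B → Disjoint (FA A) (FA B))
    (hFAunion : ∀ A : ℕ → Set T, FA (⋃ i, A i) = ⋃ i, FA (A i))
    (A₁ A₂ : Set T) (h₁ : MeasurableSet A₁) (h₂ : MeasurableSet A₂)
    (hdisj : A₁ ∩ A₂ = ∅) :
    PhiSet μ lam M FA p q κ (A₁ ∪ A₂) =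
      PhiSet μ lam M FA p q κ A₁ + PhiSet μ lam M FA p q κ A₂ := by
  have hq0 : (0:ℝ) < q := lt_of_lt_of_le zero_lt_one hq
  have hp0 : (0:ℝ) < p := hq0.trans hpq
  have hpq0 : (0:ℝ) < p - q := sub_pos.mpr hpq
  have hκ0 : (0:ℝ) < κ := by rw [hκ]; positivity
  have hdisj' : Disjoint A₁ A₂ := Set.disjoint_iff_inter_eq_empty.mpr hdisj
  have hFAempty : FA ∅ = ∅ := by
    have := hFAdisj ∅ ∅ (by simp)
    simpa [Set.bot_eq_empty] using disjoint_self.mp this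
  have hFAun2 : ∀ A B : Set T, FA (A ∪ B) = FA A ∪ FA B := by
    intro A B
    have h := hFAunion (fun i => if i = 0 then A else if i = 1 then B else ∅)
    rw [aux_iUnion_pair] at h
    rw [h]
    have he : (fun i : ℕ => FA (if i = 0 then A else if i = 1 then B else ∅))
        = fun i : ℕ => if i = 0 then FA A else if i = 1 then FA B else ∅ := by
      funext i
      by_cases h0 : i = 0
      · simp [h0]
      by_cases h1 : i = 1
      · simp [h0, h1]
      · simp [h0, h1, hFAempty]
    rw [he, aux_iUnion_pair]
  have hFAmono : ∀ {A B : Set T}, A ⊆ B → FA A ⊆ FA B := by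
    intro A B hAB
    have h := hFAun2 A B
    rw [Set.union_eq_self_of_subset_left hAB] at h
    rw [h]
    exact Set.subset_union_left
  have hPhimono : ∀ A B : Set T, A ⊆ B →
      PhiSet μ lam M FA p q κ A ≤ PhiSet μ lam M FA p q κ B := by
    intro A B hAB
    rw [PhiSet]
    refine iSup_le ?_
    rintro ⟨f, hfm, hfs, hfn⟩
    refine le_trans ?_ (le_PhiSet μ lam M FA p q κ B hfm
      (hfs.mono fun t ht hB => ht fun hA => hB (hAB hA)) hfn)
    refine ENNReal.rpow_le_rpow ?_ hκ0.le
    exact ENNReal.div_le_div_right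
      (eLpNorm_mono_measure _ (Measure.restrict_mono (hFAmono hAB) le_rfl)) _
  refine le_antisymm ?_ ?_
  · -- Φ(A₁ ∪ A₂) ≤ Φ(A₁) + Φ(A₂)
    have hbound : ∀ (B : Set T), MeasurableSet B → ∀ (fB : T → ℝ),
        MemLp fB (ENNReal.ofReal p) μ → (∀ t, t ∉ B → fB t = 0) →
        eLpNorm (M fB) (ENNReal.ofReal q) (lam.restrict (FA B))
          ≤ (PhiSet μ lam M FA p q κ B) ^ (1/κ) * eLpNorm fB (ENNReal.ofReal p) μ := by
      intro B hB fB hfBm hfBs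
      by_cases hxB : eLpNorm fB (ENNReal.ofReal p) μ = 0
      · have hfB0 : fB =ᵐ[μ] 0 := (eLpNorm_eq_zero_iff hfBm.aestronglyMeasurable
          (by simp [hp0.not_ge])).mp hxB
        have hM0 : ∀ᵐ x ∂(lam.restrict (FA B)), M fB x = 0 := by
          refine (ae_restrict_iff' (hFAmeas _ hB)).mpr ?_
          exact (hlocal fB Set.univ MeasurableSet.univ
            (hfB0.mono fun t ht _ => ht)).mono
            fun x hx hxm => hx (hFAmono (Set.subset_univ B) hxm)
        have : eLpNorm (M fB) (ENNReal.ofReal q) (lam.restrict (FA B))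
            = eLpNorm (0 : F → ℝ) (ENNReal.ofReal q) (lam.restrict (FA B)) :=
          eLpNorm_congr_ae (hM0.mono fun x hx => by simp [hx])
        rw [this]; simp
      · have hxBtop : eLpNorm fB (ENNReal.ofReal p) μ ≠ ⊤ := hfBm.eLpNorm_ne_top
        have hle := le_PhiSet μ lam M FA p q κ B hfBm (ae_of_all _ hfBs) hxB
        have h2 : eLpNorm (M fB) (ENNReal.ofReal q) (lam.restrict (FA B)) /
            eLpNorm fB (ENNReal.ofReal p) μ ≤ (PhiSet μ lam M FA p q κ B) ^ (1/κ) := by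
          calc eLpNorm (M fB) (ENNReal.ofReal q) (lam.restrict (FA B)) /
              eLpNorm fB (ENNReal.ofReal p) μ
              = ((eLpNorm (M fB) (ENNReal.ofReal q) (lam.restrict (FA B)) /
                eLpNorm fB (ENNReal.ofReal p) μ) ^ κ) ^ (1/κ) :=
                (aux_rpow_inv_rpow hκ0 _).symm
            _ ≤ _ := ENNReal.rpow_le_rpow hle (by positivity)
        calc eLpNorm (M fB) (ENNReal.ofReal q) (lam.restrict (FA B))
            = (eLpNorm (M fB) (ENNReal.ofReal q) (lam.restrict (FA B)) /
                eLpNorm fB (ENNReal.ofReal p) μ) * eLpNorm fB (ENNReal.ofReal p) μ :=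
              (ENNReal.div_mul_cancel hxB hxBtop).symm
          _ ≤ _ := mul_le_mul_left h2 _
    rw [PhiSet]
    refine iSup_le ?_
    rintro ⟨f, hfm, hfs, hfn⟩
    dsimp only
    set f₁ : T → ℝ := A₁.indicator f with hf₁def
    set f₂ : T → ℝ := A₂.indicator f with hf₂def
    have hf₁m : MemLp f₁ (ENNReal.ofReal p) μ := hfm.indicator h₁
    have hf₂m : MemLp f₂ (ENNReal.ofReal p) μ := hfm.indicator h₂
    have hf₁s : ∀ t, t ∉ A₁ → f₁ t = 0 := fun t ht => Set.indicator_of_notMem ht f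
    have hf₂s : ∀ t, t ∉ A₂ → f₂ t = 0 := fun t ht => Set.indicator_of_notMem ht f
    have hdisj12 : ∀ t, f₁ t = 0 ∨ f₂ t = 0 := by
      intro t
      by_cases ht : t ∈ A₁
      · exact Or.inr (hf₂s t (Set.disjoint_left.mp hdisj' ht))
      · exact Or.inl (hf₁s t ht)
    have hfaeq : f =ᵐ[μ] f₁ + f₂ := by
      filter_upwards [hfs] with t ht
      by_cases ht1 : t ∈ A₁
      · have ht2 : t ∉ A₂ := Set.disjoint_left.mp hdisj' ht1
        simp [f₁, f₂, Set.indicator_of_mem ht1, Set.indicator_of_notMem ht2]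
      by_cases ht2 : t ∈ A₂
      · simp [f₁, f₂, Set.indicator_of_mem ht2, Set.indicator_of_notMem ht1]
      · have h0 : f t = 0 := ht (by simp [ht1, ht2])
        simp [f₁, f₂, Set.indicator_of_notMem ht1, Set.indicator_of_notMem ht2, h0]
    set Den := eLpNorm f (ENNReal.ofReal p) μ with hDendef
    set x₁ := eLpNorm f₁ (ENNReal.ofReal p) μ with hx₁def
    set x₂ := eLpNorm f₂ (ENNReal.ofReal p) μ with hx₂def
    have hDenpow : Den ^ p = x₁ ^ p + x₂ ^ p := by
      have h1 : Den = eLpNorm (f₁ + f₂) (ENNReal.ofReal p) μ := eLpNorm_congr_ae hfaeq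
      rw [h1]
      exact aux_eLpNorm_rpow_add_of_disjoint hp0
        hf₁m.aestronglyMeasurable.aemeasurable (ae_of_all _ hdisj12)
    have hDentop : Den ≠ ⊤ := hfm.eLpNorm_ne_top
    -- M f = M f₁ + M f₂ a.e. on FA (A₁ ∪ A₂)
    set g : T → ℝ := f + (-1 : ℝ) • (f₁ + f₂) with hgdef
    have hfeq : f = (f₁ + f₂) + g := by funext t; simp [g]; ring
    have hMf : M f = fun x => M f₁ x + M f₂ x + M g x := by
      conv_lhs => rw [hfeq]
      rw [hadd, hadd]; rfl
    have hg0 : ∀ᵐ t ∂μ, g t = 0 := by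
      filter_upwards [hfaeq] with t ht
      have : f t = f₁ t + f₂ t := ht
      simp [g, this]; ring
    have hMg : ∀ᵐ x ∂lam, x ∈ FA Set.univ → M g x = 0 :=
      hlocal g Set.univ MeasurableSet.univ (hg0.mono fun t ht _ => ht)
    have hMfae : ∀ᵐ x ∂(lam.restrict (FA (A₁ ∪ A₂))), M f x = (M f₁ + M f₂) x := by
      have h := (ae_restrict_iff' (hFAmeas _ (h₁.union h₂))).mpr
        (hMg.mono fun x hx hxm => hx (hFAmono (Set.subset_univ _) hxm))
      filter_upwards [h] with x hx
      simp [hMf, hx]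
    set Num := eLpNorm (M f) (ENNReal.ofReal q) (lam.restrict (FA (A₁ ∪ A₂))) with hNumdef
    set N₁ := eLpNorm (M f₁) (ENNReal.ofReal q) (lam.restrict (FA A₁)) with hN₁def
    set N₂ := eLpNorm (M f₂) (ENNReal.ofReal q) (lam.restrict (FA A₂)) with hN₂def
    have hrestr : lam.restrict (FA (A₁ ∪ A₂))
        = lam.restrict (FA A₁) + lam.restrict (FA A₂) := by
      rw [hFAun2, Measure.restrict_union (hFAdisj _ _ hdisj') (hFAmeas _ h₂)]
    have hMf₂0 : ∀ᵐ x ∂(lam.restrict (FA A₁)), M f₂ x = 0 := by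
      refine (ae_restrict_iff' (hFAmeas _ h₁)).mpr ?_
      exact hlocal f₂ A₁ h₁ (ae_of_all _ fun t ht =>
        hf₂s t (Set.disjoint_left.mp hdisj' ht))
    have hMf₁0 : ∀ᵐ x ∂(lam.restrict (FA A₂)), M f₁ x = 0 := by
      refine (ae_restrict_iff' (hFAmeas _ h₂)).mpr ?_
      exact hlocal f₁ A₂ h₂ (ae_of_all _ fun t ht =>
        hf₁s t (Set.disjoint_right.mp hdisj' ht))
    have hNumpow : Num ^ q = N₁ ^ q + N₂ ^ q := by
      have e1 : Num = eLpNorm (M f₁ + M f₂) (ENNReal.ofReal q)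
          (lam.restrict (FA (A₁ ∪ A₂))) := eLpNorm_congr_ae hMfae
      have e2 : eLpNorm (M f₁ + M f₂) (ENNReal.ofReal q) (lam.restrict (FA A₁)) = N₁ :=
        eLpNorm_congr_ae (hMf₂0.mono fun x hx => by simp [hx])
      have e3 : eLpNorm (M f₁ + M f₂) (ENNReal.ofReal q) (lam.restrict (FA A₂)) = N₂ :=
        eLpNorm_congr_ae (hMf₁0.mono fun x hx => by simp [hx])
      rw [e1, hrestr, aux_eLpNorm_add_measure _ _ hq0, e2, e3]
    set Φ₁ := PhiSet μ lam M FA p q κ A₁ with hΦ₁def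
    set Φ₂ := PhiSet μ lam M FA p q κ A₂ with hΦ₂def
    have hN₁le : N₁ ≤ Φ₁ ^ (1/κ) * x₁ := hbound A₁ h₁ f₁ hf₁m hf₁s
    have hN₂le : N₂ ≤ Φ₂ ^ (1/κ) * x₂ := hbound A₂ h₂ f₂ hf₂m hf₂s
    have hrs : Real.HolderConjugate (p/(p-q)) (p/q) := by
      rw [Real.holderConjugate_iff]
      constructor
      · rw [lt_div_iff₀ hpq0]; linarith
      · rw [inv_div, inv_div]; field_simp; ring
    have e1 : ∀ (Φ x : ℝ≥0∞), (Φ ^ (1/κ) * x) ^ q = Φ ^ ((p-q)/p) * x ^ q := by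
      intro Φ x
      rw [ENNReal.mul_rpow_of_nonneg _ _ hq0.le, ← ENNReal.rpow_mul]
      congr 2
      rw [hκ]; field_simp
    have hkey : Num ^ q ≤ (Φ₁ + Φ₂) ^ ((p-q)/p) * Den ^ q := by
      calc Num ^ q = N₁ ^ q + N₂ ^ q := hNumpow
        _ ≤ (Φ₁ ^ (1/κ) * x₁) ^ q + (Φ₂ ^ (1/κ) * x₂) ^ q := by
            gcongr <;> exact hq0.le
        _ = Φ₁ ^ ((p-q)/p) * x₁ ^ q + Φ₂ ^ ((p-q)/p) * x₂ ^ q := by rw [e1, e1]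
        _ ≤ ((Φ₁ ^ ((p-q)/p)) ^ (p/(p-q)) + (Φ₂ ^ ((p-q)/p)) ^ (p/(p-q))) ^ (1/(p/(p-q)))
              * ((x₁ ^ q) ^ (p/q) + (x₂ ^ q) ^ (p/q)) ^ (1/(p/q)) :=
            aux_holder_two hrs _ _ _ _
        _ = (Φ₁ + Φ₂) ^ ((p-q)/p) * Den ^ q := by
            have e2 : (p-q)/p * (p/(p-q)) = 1 := by field_simp
            have e3 : q * (p/q) = p := by field_simp
            have e4 : (1:ℝ)/(p/(p-q)) = (p-q)/p := one_div_div _ _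
            have e5 : (1:ℝ)/(p/q) = q/p := one_div_div _ _
            have e6 : p * (q/p) = q := by field_simp
            rw [← ENNReal.rpow_mul Φ₁, ← ENNReal.rpow_mul Φ₂, ← ENNReal.rpow_mul x₁,
              ← ENNReal.rpow_mul x₂, e2, e3, ENNReal.rpow_one, ENNReal.rpow_one, e4, e5,
              ← hDenpow, ← ENNReal.rpow_mul, e6]
    have hNum_le : Num ≤ (Φ₁ + Φ₂) ^ (1/κ) * Den := by
      calc Num = (Num ^ q) ^ (1/q) := (aux_rpow_inv_rpow hq0 _).symm
        _ ≤ ((Φ₁ + Φ₂) ^ ((p-q)/p) * Den ^ q) ^ (1/q) :=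
            ENNReal.rpow_le_rpow hkey (by positivity)
        _ = (Φ₁ + Φ₂) ^ (1/κ) * Den := by
            rw [ENNReal.mul_rpow_of_nonneg _ _ (by positivity), ← ENNReal.rpow_mul,
              aux_rpow_inv_rpow hq0]
            congr 2
            rw [hκ]; field_simp
    have hfinal : Num / Den ≤ (Φ₁ + Φ₂) ^ (1/κ) := by
      rw [ENNReal.div_le_iff hfn hDentop]
      exact hNum_le
    calc (Num / Den) ^ κ ≤ ((Φ₁ + Φ₂) ^ (1/κ)) ^ κ := ENNReal.rpow_le_rpow hfinal hκ0.le
      _ = Φ₁ + Φ₂ := aux_rpow_rpow_inv hκ0 _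
  · -- Φ(A₁) + Φ(A₂) ≤ Φ(A₁ ∪ A₂)
    by_cases hΦ₁0 : PhiSet μ lam M FA p q κ A₁ = 0
    · rw [hΦ₁0, zero_add]
      exact hPhimono A₂ _ Set.subset_union_right
    by_cases hΦ₂0 : PhiSet μ lam M FA p q κ A₂ = 0
    · rw [hΦ₂0, add_zero]
      exact hPhimono A₁ _ Set.subset_union_left
    by_contra hcon
    push_neg at hcon
    obtain ⟨a, ha, b, hb, hab⟩ := ENNReal.exists_lt_add_of_lt_add hcon hΦ₁0 hΦ₂0
    refine absurd hab (not_lt.mpr ?_)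
    rw [PhiSet] at ha hb
    obtain ⟨⟨f₁, hf₁m, hf₁s, hf₁n⟩, hra⟩ := lt_iSup_iff.mp ha
    obtain ⟨⟨f₂, hf₂m, hf₂s, hf₂n⟩, hrb⟩ := lt_iSup_iff.mp hb
    dsimp only at hra hrb
    set x₁ := eLpNorm f₁ (ENNReal.ofReal p) μ with hx₁def
    set x₂ := eLpNorm f₂ (ENNReal.ofReal p) μ with hx₂def
    set N₁ := eLpNorm (M f₁) (ENNReal.ofReal q) (lam.restrict (FA A₁)) with hN₁def
    set N₂ := eLpNorm (M f₂) (ENNReal.ofReal q) (lam.restrict (FA A₂)) with hN₂def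
    have hx₁top : x₁ ≠ ⊤ := hf₁m.eLpNorm_ne_top
    have hx₂top : x₂ ≠ ⊤ := hf₂m.eLpNorm_ne_top
    have hN₁top : N₁ ≠ ⊤ := ne_top_of_le_ne_top (ENNReal.mul_ne_top hK hx₁top)
      ((eLpNorm_mono_measure (M f₁) Measure.restrict_le_self).trans (hbdd f₁ hf₁m))
    have hN₂top : N₂ ≠ ⊤ := ne_top_of_le_ne_top (ENNReal.mul_ne_top hK hx₂top)
      ((eLpNorm_mono_measure (M f₂) Measure.restrict_le_self).trans (hbdd f₂ hf₂m))
    set r₁ := N₁ / x₁ with hr₁def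
    set r₂ := N₂ / x₂ with hr₂def
    have hr₁top : r₁ ≠ ⊤ := (ENNReal.div_lt_top hN₁top hf₁n).ne
    have hr₂top : r₂ ≠ ⊤ := (ENNReal.div_lt_top hN₂top hf₂n).ne
    have hr₁0 : r₁ ≠ 0 := by
      intro h0
      rw [h0, ENNReal.zero_rpow_of_pos hκ0] at hra
      exact (not_lt_zero' hra).elim
    have hr₂0 : r₂ ≠ 0 := by
      intro h0
      rw [h0, ENNReal.zero_rpow_of_pos hκ0] at hrb
      exact (not_lt_zero' hrb).elim
    set c₁ := r₁ ^ κ with hc₁def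
    set c₂ := r₂ ^ κ with hc₂def
    have hc₁0 : c₁ ≠ 0 := (ENNReal.rpow_pos (pos_iff_ne_zero.mpr hr₁0) hr₁top).ne'
    have hc₂0 : c₂ ≠ 0 := (ENNReal.rpow_pos (pos_iff_ne_zero.mpr hr₂0) hr₂top).ne'
    have hc₁top : c₁ ≠ ⊤ := ENNReal.rpow_ne_top_of_nonneg hκ0.le hr₁top
    have hc₂top : c₂ ≠ ⊤ := ENNReal.rpow_ne_top_of_nonneg hκ0.le hr₂top
    -- the scaling constants
    set t₁ : ℝ := (r₁ ^ (κ/p) / x₁).toReal with ht₁def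
    set t₂ : ℝ := (r₂ ^ (κ/p) / x₂).toReal with ht₂def
    have hu₁0 : r₁ ^ (κ/p) ≠ 0 := (ENNReal.rpow_pos (pos_iff_ne_zero.mpr hr₁0) hr₁top).ne'
    have hu₂0 : r₂ ^ (κ/p) ≠ 0 := (ENNReal.rpow_pos (pos_iff_ne_zero.mpr hr₂0) hr₂top).ne'
    have hu₁top : r₁ ^ (κ/p) ≠ ⊤ := ENNReal.rpow_ne_top_of_nonneg (by positivity) hr₁top
    have hu₂top : r₂ ^ (κ/p) ≠ ⊤ := ENNReal.rpow_ne_top_of_nonneg (by positivity) hr₂top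
    have hq₁ : ENNReal.ofReal t₁ = r₁ ^ (κ/p) / x₁ :=
      ENNReal.ofReal_toReal (ENNReal.div_lt_top hu₁top hf₁n).ne
    have hq₂ : ENNReal.ofReal t₂ = r₂ ^ (κ/p) / x₂ :=
      ENNReal.ofReal_toReal (ENNReal.div_lt_top hu₂top hf₂n).ne
    have ht₁nn : 0 ≤ t₁ := ENNReal.toReal_nonneg
    have ht₂nn : 0 ≤ t₂ := ENNReal.toReal_nonneg
    -- the combined function
    set gf : T → ℝ := t₁ • f₁ + t₂ • f₂ with hgfdef
    have hgm : MemLp gf (ENNReal.ofReal p) μ := (hf₁m.const_smul t₁).add (hf₂m.const_smul t₂)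
    have hgs : ∀ᵐ t ∂μ, t ∉ A₁ ∪ A₂ → gf t = 0 := by
      filter_upwards [hf₁s, hf₂s] with t ha1 ha2 hn
      have e1 : f₁ t = 0 := ha1 fun h => hn (Or.inl h)
      have e2 : f₂ t = 0 := ha2 fun h => hn (Or.inr h)
      simp [gf, e1, e2]
    have hdis : ∀ᵐ t ∂μ, (t₁ • f₁) t = 0 ∨ (t₂ • f₂) t = 0 := by
      filter_upwards [hf₁s, hf₂s] with t ha1 ha2
      by_cases ht : t ∈ A₁
      · exact Or.inr (by simp [ha2 (Set.disjoint_left.mp hdisj' ht)])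
      · exact Or.inl (by simp [ha1 ht])
    have hsm₁ : eLpNorm (t₁ • f₁) (ENNReal.ofReal p) μ = ENNReal.ofReal t₁ * x₁ := by
      rw [eLpNorm_const_smul, Real.enorm_eq_ofReal ht₁nn]
    have hsm₂ : eLpNorm (t₂ • f₂) (ENNReal.ofReal p) μ = ENNReal.ofReal t₂ * x₂ := by
      rw [eLpNorm_const_smul, Real.enorm_eq_ofReal ht₂nn]
    have hu₁ : ENNReal.ofReal t₁ * x₁ = r₁ ^ (κ/p) := by
      rw [hq₁, ENNReal.div_mul_cancel hf₁n hx₁top]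
    have hu₂ : ENNReal.ofReal t₂ * x₂ = r₂ ^ (κ/p) := by
      rw [hq₂, ENNReal.div_mul_cancel hf₂n hx₂top]
    set Deng := eLpNorm gf (ENNReal.ofReal p) μ with hDengdef
    have hDenpow : Deng ^ p = c₁ + c₂ := by
      rw [hDengdef, hgfdef, aux_eLpNorm_rpow_add_of_disjoint hp0
        (hf₁m.const_smul t₁).aestronglyMeasurable.aemeasurable hdis,
        hsm₁, hsm₂, hu₁, hu₂, ← ENNReal.rpow_mul, ← ENNReal.rpow_mul,
        div_mul_cancel₀ κ hp0.ne']
    have hDen0 : Deng ≠ 0 := by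
      intro h0
      rw [h0, ENNReal.zero_rpow_of_pos hp0] at hDenpow
      exact hc₁0 (add_eq_zero.mp hDenpow.symm).1
    have hDentop : Deng ≠ ⊤ := hgm.eLpNorm_ne_top
    -- the numerator
    set Numg := eLpNorm (M gf) (ENNReal.ofReal q) (lam.restrict (FA (A₁ ∪ A₂))) with hNumgdef
    have hMgf : M gf = M (t₁ • f₁) + M (t₂ • f₂) := hadd _ _
    have hrestr : lam.restrict (FA (A₁ ∪ A₂))
        = lam.restrict (FA A₁) + lam.restrict (FA A₂) := by
      rw [hFAun2, Measure.restrict_union (hFAdisj _ _ hdisj') (hFAmeas _ h₂)]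
    have hM₂0 : ∀ᵐ x ∂(lam.restrict (FA A₁)), M (t₂ • f₂) x = 0 := by
      rw [hsmul]
      refine (ae_restrict_iff' (hFAmeas _ h₁)).mpr ?_
      have h := hlocal f₂ A₁ h₁ (hf₂s.mono fun t ht hA₁ => ht (Set.disjoint_left.mp hdisj' hA₁))
      exact h.mono fun x hx hxm => by simp [hx hxm]
    have hM₁0 : ∀ᵐ x ∂(lam.restrict (FA A₂)), M (t₁ • f₁) x = 0 := by
      rw [hsmul]
      refine (ae_restrict_iff' (hFAmeas _ h₂)).mpr ?_
      have h := hlocal f₁ A₂ h₂ (hf₁s.mono fun t ht hA₂ => ht (Set.disjoint_right.mp hdisj' hA₂))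
      exact h.mono fun x hx hxm => by simp [hx hxm]
    have heq₁ : eLpNorm (M gf) (ENNReal.ofReal q) (lam.restrict (FA A₁)) = r₁ ^ (κ/q) := by
      have e : eLpNorm (M gf) (ENNReal.ofReal q) (lam.restrict (FA A₁))
          = eLpNorm (M (t₁ • f₁)) (ENNReal.ofReal q) (lam.restrict (FA A₁)) :=
        eLpNorm_congr_ae (hM₂0.mono fun x hx => by rw [hMgf]; simp [hx])
      rw [e, hsmul, eLpNorm_const_smul, Real.enorm_eq_ofReal ht₁nn, hq₁,
        div_eq_mul_inv, mul_right_comm, mul_assoc, ← div_eq_mul_inv, ← hN₁def, ← hr₁def]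
      calc r₁ ^ (κ/p) * r₁ = r₁ ^ (κ/p) * r₁ ^ (1:ℝ) := by rw [ENNReal.rpow_one]
        _ = r₁ ^ (κ/p + 1) := (ENNReal.rpow_add _ _ hr₁0 hr₁top).symm
        _ = r₁ ^ (κ/q) := by
            congr 1
            rw [hκ]; field_simp; ring
    have heq₂ : eLpNorm (M gf) (ENNReal.ofReal q) (lam.restrict (FA A₂)) = r₂ ^ (κ/q) := by
      have e : eLpNorm (M gf) (ENNReal.ofReal q) (lam.restrict (FA A₂))
          = eLpNorm (M (t₂ • f₂)) (ENNReal.ofReal q) (lam.restrict (FA A₂)) :=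
        eLpNorm_congr_ae (hM₁0.mono fun x hx => by rw [hMgf]; simp [hx])
      rw [e, hsmul, eLpNorm_const_smul, Real.enorm_eq_ofReal ht₂nn, hq₂,
        div_eq_mul_inv, mul_right_comm, mul_assoc, ← div_eq_mul_inv, ← hN₂def, ← hr₂def]
      calc r₂ ^ (κ/p) * r₂ = r₂ ^ (κ/p) * r₂ ^ (1:ℝ) := by rw [ENNReal.rpow_one]
        _ = r₂ ^ (κ/p + 1) := (ENNReal.rpow_add _ _ hr₂0 hr₂top).symm
        _ = r₂ ^ (κ/q) := by
            congr 1
            rw [hκ]; field_simp; ring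
    have hNumpow : Numg ^ q = c₁ + c₂ := by
      rw [hNumgdef, hrestr, aux_eLpNorm_add_measure _ _ hq0, heq₁, heq₂,
        ← ENNReal.rpow_mul, ← ENNReal.rpow_mul, div_mul_cancel₀ κ hq0.ne']
    set S := c₁ + c₂ with hSdef
    have hS0 : S ≠ 0 := fun h => hc₁0 (add_eq_zero.mp h).1
    have hStop : S ≠ ⊤ := ENNReal.add_ne_top.mpr ⟨hc₁top, hc₂top⟩
    have hNum : Numg = S ^ (1/q) := by
      rw [← aux_rpow_inv_rpow hq0 Numg, hNumpow]
    have hDen : Deng = S ^ (1/p) := by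
      rw [← aux_rpow_inv_rpow hp0 Deng, hDenpow]
    have hratio : Numg / Deng = S ^ (1/q - 1/p) := by
      rw [hNum, hDen]
      symm
      rw [ENNReal.eq_div_iff (by
          exact fun h => hS0 (by
            have := ENNReal.rpow_eq_zero_iff.mp h
            rcases this with ⟨h1, _⟩ | ⟨h1, h2⟩
            · exact h1
            · exact absurd h1 hStop)) (ENNReal.rpow_ne_top_of_nonneg (by positivity) hStop)]
      rw [← ENNReal.rpow_add _ _ hS0 hStop]
      congr 1
      ring
    have hfinal : (Numg / Deng) ^ κ = S := by
      rw [hratio, ← ENNReal.rpow_mul]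
      have e : (1/q - 1/p) * κ = 1 := by
        rw [hκ]; field_simp
      rw [e, ENNReal.rpow_one]
    have hcand := le_PhiSet μ lam M FA p q κ (A₁ ∪ A₂) hgm hgs hDen0
    rw [hfinal] at hcand
    exact le_of_lt (lt_of_lt_of_le (ENNReal.add_lt_add hra hrb) hcand)
end

section
/- Let (T, μ), (S, ν) be σ-finite measure spaces, 1 ≤ q ≤ p < ∞, and ψ : S → T measurable with ν ∘ ψ⁻¹ ≪ μ and J = d(ν∘ψ⁻¹)/dμ. If J^{1/q} ∈ L^κ(T, μ), where κ = pq/(p−q) for p > q and κ = ∞ for p = q, then the composition operator C_ψ f = f ∘ ψ is bounded from L^p(T, μ) to L^q(S, ν) with norm at most ‖J^{1/q}‖_{L^κ(T,μ)}. -/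
open MeasureTheory ENNReal

/-- The `L^κ` norm of a nonnegative (`ℝ≥0∞`-valued) function, with `κ = pq/(p-q)` if
`p > q` and `κ = ∞` (essential supremum) if `p = q`. -/
noncomputable def lKappaNorm {T : Type*} [MeasurableSpace T] (μ : Measure T)
    (p q : ℝ) (g : T → ℝ≥0∞) : ℝ≥0∞ :=
  if p = q then essSup g μ
  else (∫⁻ t, g t ^ (p * q / (p - q)) ∂μ) ^ ((p - q) / (p * q))

/-- Sufficiency: if `J^{1/q} ∈ L^κ(T,μ)` (`κ = pq/(p-q)` for `p > q`, `κ = ∞` for `p = q`),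
where `J = d(ν∘ψ⁻¹)/dμ`, then the composition operator `C_ψ f = f ∘ ψ` is bounded from
`L^p(T,μ)` to `L^q(S,ν)` with norm at most `‖J^{1/q}‖_{L^κ}`. -/
theorem composition_operator_bounded_of_memLkappa
    {T S : Type*} [MeasurableSpace T] [MeasurableSpace S]
    (μ : Measure T) (ν : Measure S) [SigmaFinite μ] [SigmaFinite ν]
    (p q : ℝ) (hq : 1 ≤ q) (hpq : q ≤ p)
    (ψ : S → T) (hψ : Measurable ψ)
    (habs : Measure.map ψ ν ≪ μ)
    (J : T → ℝ≥0∞) (hJ : J = (Measure.map ψ ν).rnDeriv μ)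
    (hfin : lKappaNorm μ p q (fun t => J t ^ (1 / q)) ≠ ⊤) :
    ∀ f : T → ℝ, Measurable f →
      eLpNorm (fun s => f (ψ s)) (ENNReal.ofReal q) ν ≤
        lKappaNorm μ p q (fun t => J t ^ (1 / q)) * eLpNorm f (ENNReal.ofReal p) μ := by
  intro f hf
  have hq0 : (0:ℝ) < q := lt_of_lt_of_le one_pos hq
  have hp0 : (0:ℝ) < p := lt_of_lt_of_le hq0 hpq
  have hqne : ENNReal.ofReal q ≠ 0 := by
    simp only [ne_eq, ENNReal.ofReal_eq_zero, not_le]; exact hq0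
  have hpne : ENNReal.ofReal p ≠ 0 := by
    simp only [ne_eq, ENNReal.ofReal_eq_zero, not_le]; exact hp0
  have hqtr : (ENNReal.ofReal q).toReal = q := ENNReal.toReal_ofReal hq0.le
  have hptr : (ENNReal.ofReal p).toReal = p := ENNReal.toReal_ofReal hp0.le
  have hJm : Measurable J := by rw [hJ]; exact Measure.measurable_rnDeriv _ _
  have hmap : μ.withDensity J = Measure.map ψ ν := by
    rw [hJ]; exact Measure.withDensity_rnDeriv_eq _ _ habs
  have hfm : Measurable fun t => (‖f t‖₊ : ℝ≥0∞) ^ q := hf.enorm.pow_const q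
  have hcov : ∫⁻ s, (‖f (ψ s)‖₊ : ℝ≥0∞) ^ q ∂ν
      = ∫⁻ t, (‖f t‖₊ : ℝ≥0∞) ^ q * J t ∂μ := by
    rw [← lintegral_map hfm hψ, ← hmap,
      lintegral_withDensity_eq_lintegral_mul _ hJm hfm]
    exact lintegral_congr fun t => mul_comm _ _
  rw [eLpNorm_eq_lintegral_rpow_enorm_toReal hqne ENNReal.ofReal_ne_top,
    eLpNorm_eq_lintegral_rpow_enorm_toReal hpne ENNReal.ofReal_ne_top, hqtr, hptr]
  simp only [enorm_eq_nnnorm]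
  rw [hcov]
  rcases eq_or_lt_of_le hpq with hpq' | hpq'
  · -- case p = q
    subst hpq'
    simp only [lKappaNorm, if_pos rfl] at hfin ⊢
    set C := essSup (fun t => J t ^ (1/q)) μ with hC
    have hCq : C ^ q ≠ ∞ := ENNReal.rpow_ne_top_of_nonneg hq0.le hfin
    have hae : ∀ᵐ t ∂μ, J t ≤ C ^ q := by
      filter_upwards [_root_.ae_le_essSup (f := fun t => J t ^ (1/q)) (μ := μ)] with t ht
      calc J t = (J t ^ (1/q)) ^ q := by
            rw [← ENNReal.rpow_mul, one_div, inv_mul_cancel₀ hq0.ne', ENNReal.rpow_one]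
        _ ≤ C ^ q := ENNReal.rpow_le_rpow ht hq0.le
    calc (∫⁻ t, (‖f t‖₊ : ℝ≥0∞) ^ q * J t ∂μ) ^ (1/q)
        ≤ (∫⁻ t, (‖f t‖₊ : ℝ≥0∞) ^ q * C ^ q ∂μ) ^ (1/q) := by
          apply ENNReal.rpow_le_rpow _ (by positivity)
          exact lintegral_mono_ae (hae.mono fun t ht => mul_le_mul_right ht _)
      _ = (C ^ q * ∫⁻ t, (‖f t‖₊ : ℝ≥0∞) ^ q ∂μ) ^ (1/q) := by
          rw [lintegral_mul_const' _ _ hCq, mul_comm]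
      _ = C * (∫⁻ t, (‖f t‖₊ : ℝ≥0∞) ^ q ∂μ) ^ (1/q) := by
          rw [ENNReal.mul_rpow_of_nonneg _ _ (by positivity), ← ENNReal.rpow_mul,
            mul_one_div, div_self hq0.ne', ENNReal.rpow_one]
  · -- case q < p
    have hd : (0:ℝ) < p - q := sub_pos.2 hpq'
    simp only [lKappaNorm, if_neg hpq'.ne'] at hfin ⊢
    have hconj : Real.HolderConjugate (p/q) (p/(p-q)) := by
      rw [Real.holderConjugate_iff]
      constructor
      · rw [lt_div_iff₀ hq0]; linarith
      · field_simp; ring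
    have holder := ENNReal.lintegral_mul_le_Lp_mul_Lq μ hconj
      hfm.aemeasurable hJm.aemeasurable
    simp only [Pi.mul_apply] at holder
    have e1 : ∀ x : ℝ≥0∞, (x ^ q) ^ (p/q) = x ^ p := fun x => by
      rw [← ENNReal.rpow_mul, show q * (p/q) = p by field_simp]
    have e2 : ∀ x : ℝ≥0∞, x ^ (p/(p-q)) = (x ^ (1/q)) ^ (p*q/(p-q)) := fun x => by
      rw [← ENNReal.rpow_mul, show (1/q) * (p*q/(p-q)) = p/(p-q) by field_simp]
    simp only [e1, e2, one_div_div] at holder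
    calc (∫⁻ t, (‖f t‖₊ : ℝ≥0∞) ^ q * J t ∂μ) ^ (1/q)
        ≤ ((∫⁻ t, (‖f t‖₊ : ℝ≥0∞) ^ p ∂μ) ^ (q/p)
            * (∫⁻ t, (J t ^ (1/q)) ^ (p*q/(p-q)) ∂μ) ^ ((p-q)/p)) ^ (1/q) :=
          ENNReal.rpow_le_rpow holder (by positivity)
      _ = (∫⁻ t, (J t ^ (1/q)) ^ (p*q/(p-q)) ∂μ) ^ ((p-q)/(p*q))
            * (∫⁻ t, (‖f t‖₊ : ℝ≥0∞) ^ p ∂μ) ^ (1/p) := by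
          rw [ENNReal.mul_rpow_of_nonneg _ _ (by positivity), ← ENNReal.rpow_mul,
            ← ENNReal.rpow_mul, mul_comm]
          rw [show (p-q)/p * (1/q) = (p-q)/(p*q) by field_simp,
            show q/p * (1/q) = 1/p by field_simp]
end

section
/- Let (T, μ), (S, ν) be σ-finite measure spaces, p = q ∈ [1,∞), and ψ : S → T measurable with ν ∘ ψ⁻¹ ≪ μ and J = d(ν∘ψ⁻¹)/dμ. Then the composition operator C_ψ f = f ∘ ψ is bounded from L^p(T, μ) to L^p(S, ν) if and only if J ∈ L^∞(T, μ), and in that case ‖C_ψ‖ = ‖J‖_{L^∞}^{1/p}. -/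
open MeasureTheory ENNReal

/-- For `p = q`, the composition operator `C_ψ f = f ∘ ψ` is bounded from `L^p(T,μ)` to
`L^p(S,ν)` if and only if `J = d(ν∘ψ⁻¹)/dμ ∈ L^∞(T,μ)`, and in that case
`‖C_ψ‖ = ‖J‖_{L^∞}^{1/p}`. -/
theorem composition_operator_bounded_iff_rnDeriv_essBdd
    {T S : Type*} [MeasurableSpace T] [MeasurableSpace S]
    (μ : Measure T) (ν : Measure S) [SigmaFinite μ] [SigmaFinite ν]
    (p : ℝ) (hp : 1 ≤ p)
    (ψ : S → T) (hψ : Measurable ψ)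
    (habs : Measure.map ψ ν ≪ μ)
    (J : T → ℝ≥0∞) (hJ : J = (Measure.map ψ ν).rnDeriv μ) :
    ((∃ K : ℝ≥0∞, K ≠ ⊤ ∧ ∀ f : T → ℝ, Measurable f →
        eLpNorm (fun s => f (ψ s)) (ENNReal.ofReal p) ν ≤
          K * eLpNorm f (ENNReal.ofReal p) μ) ↔ essSup J μ ≠ ⊤)
    ∧ (∀ f : T → ℝ, Measurable f →
        eLpNorm (fun s => f (ψ s)) (ENNReal.ofReal p) ν ≤
          (essSup J μ) ^ (1 / p) * eLpNorm f (ENNReal.ofReal p) μ)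
    ∧ (∀ K : ℝ≥0∞, (∀ f : T → ℝ, Measurable f →
        eLpNorm (fun s => f (ψ s)) (ENNReal.ofReal p) ν ≤
          K * eLpNorm f (ENNReal.ofReal p) μ) → (essSup J μ) ^ (1 / p) ≤ K) := by
  have hp0 : (0:ℝ) < p := lt_of_lt_of_le one_pos hp
  have hpne : ENNReal.ofReal p ≠ 0 := by
    simp only [ne_eq, ENNReal.ofReal_eq_zero, not_le]; exact hp0
  have hptop : ENNReal.ofReal p ≠ ∞ := ofReal_ne_top
  have htR : (ENNReal.ofReal p).toReal = p := ENNReal.toReal_ofReal hp0.le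
  have hJm : Measurable J := hJ ▸ Measure.measurable_rnDeriv _ _
  have h1p : (0:ℝ) < 1 / p := by positivity
  -- key identity
  have key : ∀ f : T → ℝ, Measurable f →
      eLpNorm (fun s => f (ψ s)) (ENNReal.ofReal p) ν
        = (∫⁻ t, J t * (‖f t‖₊ : ℝ≥0∞) ^ p ∂μ) ^ (1/p) := by
    intro f hf
    have hg : Measurable fun t => ((‖f t‖₊ : ℝ≥0∞)) ^ p := hf.enorm.pow_const p
    rw [eLpNorm_eq_lintegral_rpow_enorm_toReal hpne hptop, htR]
    congr 1
    calc ∫⁻ s, (‖f (ψ s)‖₊ : ℝ≥0∞) ^ p ∂ν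
        = ∫⁻ t, (‖f t‖₊ : ℝ≥0∞) ^ p ∂(Measure.map ψ ν) := (lintegral_map hg hψ).symm
      _ = ∫⁻ t, (‖f t‖₊ : ℝ≥0∞) ^ p ∂(μ.withDensity J) := by
          rw [hJ, Measure.withDensity_rnDeriv_eq _ _ habs]
      _ = ∫⁻ t, J t * (‖f t‖₊ : ℝ≥0∞) ^ p ∂μ :=
          lintegral_withDensity_eq_lintegral_mul μ hJm hg
  have keyμ : ∀ f : T → ℝ, Measurable f →
      eLpNorm f (ENNReal.ofReal p) μ = (∫⁻ t, (‖f t‖₊ : ℝ≥0∞) ^ p ∂μ) ^ (1/p) := by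
    intro f hf
    rw [eLpNorm_eq_lintegral_rpow_enorm_toReal hpne hptop, htR]; rfl
  -- upper bound
  have upper : ∀ f : T → ℝ, Measurable f →
      eLpNorm (fun s => f (ψ s)) (ENNReal.ofReal p) ν ≤
        (essSup J μ) ^ (1 / p) * eLpNorm f (ENNReal.ofReal p) μ := by
    intro f hf
    have hg : Measurable fun t => ((‖f t‖₊ : ℝ≥0∞)) ^ p := hf.enorm.pow_const p
    rw [key f hf, keyμ f hf]
    have h1 : ∫⁻ t, J t * (‖f t‖₊ : ℝ≥0∞) ^ p ∂μ
        ≤ essSup J μ * ∫⁻ t, (‖f t‖₊ : ℝ≥0∞) ^ p ∂μ := by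
      calc ∫⁻ t, J t * (‖f t‖₊ : ℝ≥0∞) ^ p ∂μ
          ≤ ∫⁻ t, essSup J μ * (‖f t‖₊ : ℝ≥0∞) ^ p ∂μ :=
            lintegral_mono_ae ((ae_le_essSup J).mono fun t ht => mul_le_mul_left ht _)
        _ = essSup J μ * ∫⁻ t, (‖f t‖₊ : ℝ≥0∞) ^ p ∂μ := lintegral_const_mul _ hg
    calc (∫⁻ t, J t * (‖f t‖₊ : ℝ≥0∞) ^ p ∂μ) ^ (1/p)
        ≤ (essSup J μ * ∫⁻ t, (‖f t‖₊ : ℝ≥0∞) ^ p ∂μ) ^ (1/p) :=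
          ENNReal.rpow_le_rpow h1 h1p.le
      _ = (essSup J μ) ^ (1/p) * (∫⁻ t, (‖f t‖₊ : ℝ≥0∞) ^ p ∂μ) ^ (1/p) :=
          ENNReal.mul_rpow_of_nonneg _ _ h1p.le
  -- lower bound on any valid K
  have lower : ∀ K : ℝ≥0∞, (∀ f : T → ℝ, Measurable f →
      eLpNorm (fun s => f (ψ s)) (ENNReal.ofReal p) ν ≤
        K * eLpNorm f (ENNReal.ofReal p) μ) → (essSup J μ) ^ (1 / p) ≤ K := by
    intro K hK
    by_contra hcon
    push_neg at hcon
    have hKp : K ^ p < essSup J μ := by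
      have := ENNReal.rpow_lt_rpow hcon hp0
      rwa [← ENNReal.rpow_mul, one_div, inv_mul_cancel₀ hp0.ne', ENNReal.rpow_one] at this
    obtain ⟨c, hc1, hc2⟩ := exists_between hKp
    set B : Set T := {t | c < J t} with hB
    have hBm : MeasurableSet B := measurableSet_lt measurable_const hJm
    have hBpos : 0 < μ B := by
      rw [pos_iff_ne_zero]
      intro h0
      have hle : J ≤ᵐ[μ] fun _ => c := by
        rw [Filter.EventuallyLE, ae_iff]
        simpa [hB, not_le] using h0
      exact absurd (essSup_le_of_ae_le c hle) (not_le.mpr hc2)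
    obtain ⟨A, hAm, hAB, hA0, hAfin⟩ := Measure.exists_subset_measure_lt_top hBm hBpos
    set f : T → ℝ := A.indicator (fun _ => (1:ℝ)) with hf_def
    have hf : Measurable f := measurable_const.indicator hAm
    have hg_eq : (fun t => (‖f t‖₊ : ℝ≥0∞) ^ p) = A.indicator (fun _ => (1:ℝ≥0∞)) := by
      funext t
      by_cases ht : t ∈ A
      · simp [hf_def, Set.indicator_of_mem ht]
      · simp [hf_def, Set.indicator_of_notMem ht, ENNReal.zero_rpow_of_pos hp0]
    have hmul_eq : (fun t => J t * (‖f t‖₊ : ℝ≥0∞) ^ p) = A.indicator J := by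
      funext t
      by_cases ht : t ∈ A
      · simp [congrFun hg_eq t, Set.indicator_of_mem ht]
      · simp [congrFun hg_eq t, Set.indicator_of_notMem ht]
    have hint1 : ∫⁻ t, J t * (‖f t‖₊ : ℝ≥0∞) ^ p ∂μ = ∫⁻ t in A, J t ∂μ := by
      rw [hmul_eq, lintegral_indicator hAm]
    have hint2 : ∫⁻ t, (‖f t‖₊ : ℝ≥0∞) ^ p ∂μ = μ A := by
      rw [hg_eq, lintegral_indicator hAm, setLIntegral_one]
    have hlow : c * μ A ≤ ∫⁻ t in A, J t ∂μ := by
      calc c * μ A = ∫⁻ _ in A, c ∂μ := (setLIntegral_const A c).symm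
        _ ≤ ∫⁻ t in A, J t ∂μ :=
          setLIntegral_mono hJm (fun t ht => (hAB ht).le)
    have hup : ∫⁻ t in A, J t ∂μ ≤ K ^ p * μ A := by
      have h := hK f hf
      rw [key f hf, keyμ f hf, hint1, hint2] at h
      have h2 := ENNReal.rpow_le_rpow h hp0.le
      rwa [← ENNReal.rpow_mul, one_div, inv_mul_cancel₀ hp0.ne', ENNReal.rpow_one,
        ENNReal.mul_rpow_of_nonneg _ _ hp0.le, ← ENNReal.rpow_mul, inv_mul_cancel₀ hp0.ne',
        ENNReal.rpow_one] at h2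
    have : c ≤ K ^ p := by
      have hmul : c * μ A ≤ K ^ p * μ A := hlow.trans hup
      exact (ENNReal.mul_le_mul_iff_left hA0.ne' hAfin.ne).mp hmul
    exact absurd this (not_le.mpr hc1)
  refine ⟨⟨?_, ?_⟩, upper, lower⟩
  · rintro ⟨K, hKtop, hKb⟩ htop
    have h := lower K hKb
    rw [htop, ENNReal.top_rpow_of_pos h1p] at h
    exact hKtop (top_le_iff.mp h)
  · intro h
    exact ⟨(essSup J μ) ^ (1/p),
      (ENNReal.rpow_lt_top_of_nonneg h1p.le h).ne, upper⟩
end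

section
/- Let (T, μ), (S, ν) be σ-finite measure spaces, 1 ≤ q < p < ∞, κ = pq/(p−q), and ψ : S → T measurable with ν ∘ ψ⁻¹ ≪ μ and J = d(ν∘ψ⁻¹)/dμ. If the composition operator C_ψ f = f ∘ ψ is bounded from L^p(T, μ) to L^q(S, ν), then J^{1/q} ∈ L^κ(T, μ). -/
open MeasureTheory ENNReal

private lemma key_ineq {T S : Type*} [MeasurableSpace T] [MeasurableSpace S]
    (μ : Measure T) (ν : Measure S) [SigmaFinite μ] [SigmaFinite ν]
    (p q : ℝ) (hq : 1 ≤ q) (hpq : q < p)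
    (ψ : S → T) (hψ : Measurable ψ)
    (habs : Measure.map ψ ν ≪ μ)
    (J : T → ℝ≥0∞) (hJ : J = (Measure.map ψ ν).rnDeriv μ)
    (K : ℝ≥0∞)
    (hbdd : ∀ f : T → ℝ, Measurable f →
      eLpNorm (fun s => f (ψ s)) (ENNReal.ofReal q) ν ≤
        K * eLpNorm f (ENNReal.ofReal p) μ)
    (g : T → ℝ≥0∞) (hg : Measurable g) (hgfin : ∀ t, g t ≠ ∞) :
    ∫⁻ t, g t * J t ∂μ ≤ K ^ q * (∫⁻ t, g t ^ (p/q) ∂μ) ^ (q/p) := by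
  have hq0 : (0:ℝ) < q := lt_of_lt_of_le one_pos hq
  have hp0 : (0:ℝ) < p := hq0.trans hpq
  have hJm : Measurable J := hJ ▸ Measure.measurable_rnDeriv _ _
  set f : T → ℝ := fun t => (g t ^ q⁻¹).toReal with hf
  have hfm : Measurable f := (hg.pow_const _).ennreal_toReal
  have hnorm : ∀ t, (‖f t‖₊ : ℝ≥0∞) = g t ^ q⁻¹ := by
    intro t
    rw [hf]
    have hfin : g t ^ q⁻¹ ≠ ∞ := ENNReal.rpow_ne_top_of_nonneg (by positivity) (hgfin t)
    rw [← enorm_eq_nnnorm, ← ofReal_norm, Real.norm_eq_abs,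
      abs_of_nonneg ENNReal.toReal_nonneg, ENNReal.ofReal_toReal hfin]
  have hq' : ENNReal.ofReal q ≠ 0 := by simp [ENNReal.ofReal_eq_zero, not_le, hq0]
  have hp' : ENNReal.ofReal p ≠ 0 := by simp [ENNReal.ofReal_eq_zero, not_le, hp0]
  have key := hbdd f hfm
  rw [eLpNorm_eq_lintegral_rpow_enorm_toReal hq' ENNReal.ofReal_ne_top,
      eLpNorm_eq_lintegral_rpow_enorm_toReal hp' ENNReal.ofReal_ne_top,
      ENNReal.toReal_ofReal hq0.le, ENNReal.toReal_ofReal hp0.le] at key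
  simp only [enorm_eq_nnnorm] at key
  have hmap : Measure.map ψ ν = μ.withDensity J := by
    rw [hJ, Measure.withDensity_rnDeriv_eq _ _ habs]
  have hL : ∫⁻ s, (‖f (ψ s)‖₊ : ℝ≥0∞) ^ q ∂ν = ∫⁻ t, g t * J t ∂μ := by
    have h1 : ∫⁻ s, (‖f (ψ s)‖₊ : ℝ≥0∞) ^ q ∂ν
        = ∫⁻ t, (‖f t‖₊ : ℝ≥0∞) ^ q ∂(Measure.map ψ ν) :=
      (lintegral_map (hfm.nnnorm.coe_nnreal_ennreal.pow_const _) hψ).symm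
    rw [h1, hmap, lintegral_withDensity_eq_lintegral_mul μ hJm
      (hfm.nnnorm.coe_nnreal_ennreal.pow_const _)]
    refine lintegral_congr fun t => ?_
    simp only [Pi.mul_apply, hnorm t, ← ENNReal.rpow_natCast]
    rw [← ENNReal.rpow_mul, inv_mul_cancel₀ hq0.ne', ENNReal.rpow_one, mul_comm]
  have hR : ∫⁻ t, (‖f t‖₊ : ℝ≥0∞) ^ p ∂μ = ∫⁻ t, g t ^ (p/q) ∂μ := by
    refine lintegral_congr fun t => ?_
    rw [hnorm t, ← ENNReal.rpow_mul]
    ring_nf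
  rw [hL, hR] at key
  calc ∫⁻ t, g t * J t ∂μ
      = ((∫⁻ t, g t * J t ∂μ) ^ (1/q)) ^ q := by
        rw [← ENNReal.rpow_mul, one_div, inv_mul_cancel₀ hq0.ne', ENNReal.rpow_one]
    _ ≤ (K * (∫⁻ t, g t ^ (p/q) ∂μ) ^ (1/p)) ^ q :=
        ENNReal.rpow_le_rpow key hq0.le
    _ = K ^ q * (∫⁻ t, g t ^ (p/q) ∂μ) ^ (q/p) := by
        rw [ENNReal.mul_rpow_of_nonneg _ _ hq0.le, ← ENNReal.rpow_mul]
        ring_nf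

/-- Necessity for `p > q`: if the composition operator `C_ψ f = f ∘ ψ` is bounded from
`L^p(T,μ)` to `L^q(S,ν)` then `J^{1/q} ∈ L^κ(T,μ)`, `κ = pq/(p-q)`,
where `J = d(ν∘ψ⁻¹)/dμ`. -/
theorem rnDeriv_memLkappa_of_composition_operator_bounded
    {T S : Type*} [MeasurableSpace T] [MeasurableSpace S]
    (μ : Measure T) (ν : Measure S) [SigmaFinite μ] [SigmaFinite ν]
    (p q κ : ℝ) (hq : 1 ≤ q) (hpq : q < p) (hκ : κ = p * q / (p - q))
    (ψ : S → T) (hψ : Measurable ψ)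
    (habs : Measure.map ψ ν ≪ μ)
    (J : T → ℝ≥0∞) (hJ : J = (Measure.map ψ ν).rnDeriv μ)
    (K : ℝ≥0∞) (hK : K ≠ ⊤)
    (hbdd : ∀ f : T → ℝ, Measurable f →
      eLpNorm (fun s => f (ψ s)) (ENNReal.ofReal q) ν ≤
        K * eLpNorm f (ENNReal.ofReal p) μ) :
    ∫⁻ t, (J t ^ (1 / q)) ^ κ ∂μ ≠ ⊤ := by
  have hq0 : (0:ℝ) < q := lt_of_lt_of_le one_pos hq
  have hp0 : (0:ℝ) < p := hq0.trans hpq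
  have hd0 : (0:ℝ) < p - q := sub_pos.mpr hpq
  have hJm : Measurable J := hJ ▸ Measure.measurable_rnDeriv _ _
  set r : ℝ := p / (p - q) with hr
  set e : ℝ := q / (p - q) with he
  have hr0 : (0:ℝ) < r := by positivity
  have hr1 : (1:ℝ) ≤ r := by
    rw [hr, le_div_iff₀ hd0]; linarith
  have he0 : (0:ℝ) < e := by positivity
  have her : e * (p / q) = r := by
    rw [he, hr]; field_simp
  have her1 : e + 1 = r := by
    rw [he, hr]; field_simp; ring
  have hκr : (1/q) * κ = r := by
    rw [hκ, hr]
    field_simp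
  have hκq : q * r = κ := by
    rw [hκ, hr]
    field_simp
  -- the approximating functions
  set A : ℕ → Set T := spanningSets μ with hA
  set h : ℕ → T → ℝ≥0∞ :=
    fun n => (A n).indicator (fun t => min (J t) n ^ r) with hh
  have hAm : ∀ n, MeasurableSet (A n) := fun n => measurableSet_spanningSets μ n
  have hhm : ∀ n, Measurable (h n) := fun n =>
    ((hJm.min measurable_const).pow_const r).indicator (hAm n)
  -- uniform bound on ∫ h n
  have hbound : ∀ n, ∫⁻ t, h n t ∂μ ≤ K ^ κ := by
    intro n
    set g : T → ℝ≥0∞ := fun t => (A n).indicator (fun t => min (J t) n ^ e) t with hgdef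
    have hgm : Measurable g := ((hJm.min measurable_const).pow_const e).indicator (hAm n)
    have hgfin : ∀ t, g t ≠ ∞ := by
      intro t
      rw [hgdef]
      by_cases ht : t ∈ A n
      · simp only [Set.indicator_of_mem ht]
        exact ENNReal.rpow_ne_top_of_nonneg he0.le
          (ne_top_of_le_ne_top (ENNReal.natCast_ne_top n) (min_le_right _ _))
      · simp [Set.indicator_of_notMem ht]
    have key := key_ineq μ ν p q hq hpq ψ hψ habs J hJ K hbdd g hgm hgfin
    -- LHS ≥ ∫ h n
    have hL : ∫⁻ t, h n t ∂μ ≤ ∫⁻ t, g t * J t ∂μ := by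
      refine lintegral_mono fun t => ?_
      rw [hh, hgdef]
      by_cases ht : t ∈ A n
      · simp only [Set.indicator_of_mem ht]
        rcases eq_or_ne (min (J t) n) 0 with h0 | h0
        · rw [h0, ENNReal.zero_rpow_of_pos hr0]; exact zero_le
        · calc min (J t) n ^ r = min (J t) n ^ e * min (J t) n := by
                rw [← her1, ENNReal.rpow_add _ _ h0
                  (ne_top_of_le_ne_top (ENNReal.natCast_ne_top n) (min_le_right _ _)),
                  ENNReal.rpow_one]
            _ ≤ min (J t) n ^ e * J t := by
                gcongr
                exact min_le_left _ _
      · simp [Set.indicator_of_notMem ht]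
    -- RHS integral equals ∫ h n
    have hR : ∫⁻ t, g t ^ (p/q) ∂μ = ∫⁻ t, h n t ∂μ := by
      refine lintegral_congr fun t => ?_
      rw [hh, hgdef]
      by_cases ht : t ∈ A n
      · simp only [Set.indicator_of_mem ht]
        rw [← ENNReal.rpow_mul, her]
      · simp only [Set.indicator_of_notMem ht]
        rw [ENNReal.zero_rpow_of_pos (by positivity)]
    rw [hR] at key
    set I : ℝ≥0∞ := ∫⁻ t, h n t ∂μ with hI
    have hIfin : I ≠ ∞ := by
      have : I ≤ (n : ℝ≥0∞) ^ r * μ (A n) := by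
        simp only [hI, hh]
        rw [lintegral_indicator (hAm n)]
        calc ∫⁻ t in A n, min (J t) n ^ r ∂μ
            ≤ ∫⁻ _ in A n, (n : ℝ≥0∞) ^ r ∂μ := by
              refine lintegral_mono fun t => ?_
              exact ENNReal.rpow_le_rpow (min_le_right _ _) hr0.le
          _ = (n : ℝ≥0∞) ^ r * μ (A n) := by
              rw [setLIntegral_const]
      refine ne_top_of_le_ne_top ?_ this
      exact ENNReal.mul_ne_top (ENNReal.rpow_ne_top_of_nonneg hr0.le (ENNReal.natCast_ne_top n))
        (measure_spanningSets_lt_top μ n).ne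
    have hIK : I ≤ K ^ q * I ^ (q/p) := le_trans hL key
    rcases eq_or_ne I 0 with h0 | h0
    · rw [h0]; exact zero_le
    -- cancel I^(q/p)
    have hpow_ne : I ^ (q/p) ≠ 0 := by
      simp [ENNReal.rpow_eq_zero_iff, h0, hIfin, not_or]
    have hpow_fin : I ^ (q/p) ≠ ∞ := ENNReal.rpow_ne_top_of_nonneg (by positivity) hIfin
    have hc : I ^ (1 - q/p) ≤ K ^ q := by
      have hIK2 : I ^ (1 - q/p) * I ^ (q/p) ≤ K ^ q * I ^ (q/p) := by
        calc I ^ (1 - q/p) * I ^ (q/p) = I := by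
              rw [← ENNReal.rpow_add _ _ h0 hIfin]; norm_num
          _ ≤ K ^ q * I ^ (q/p) := hIK
      exact (ENNReal.mul_le_mul_iff_left hpow_ne hpow_fin).mp hIK2
    have hexp : (1 - q/p) * r = 1 := by
      rw [hr]; field_simp
    calc I = (I ^ (1 - q/p)) ^ r := by
          rw [← ENNReal.rpow_mul, hexp, ENNReal.rpow_one]
      _ ≤ (K ^ q) ^ r := ENNReal.rpow_le_rpow hc hr0.le
      _ = K ^ κ := by rw [← ENNReal.rpow_mul, hκq]
  -- pointwise sup equals J^r
  have hsup : ∀ t, ⨆ n, h n t = J t ^ r := by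
    intro t
    refine le_antisymm (iSup_le fun n => ?_) ?_
    · rw [hh]
      by_cases ht : t ∈ A n
      · simp only [Set.indicator_of_mem ht]
        exact ENNReal.rpow_le_rpow (min_le_left _ _) hr0.le
      · simp [Set.indicator_of_notMem ht]
    · obtain ⟨N, hN⟩ : ∃ N, t ∈ A N := by
        have : t ∈ ⋃ n, A n := by rw [hA, iUnion_spanningSets]; trivial
        exact Set.mem_iUnion.mp this
      rcases eq_or_ne (J t) ∞ with hJt | hJt
      · rw [hJt, ENNReal.top_rpow_of_pos hr0]
        rw [top_le_iff, ← top_le_iff, ← ENNReal.iSup_natCast]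
        refine iSup_le fun c => ?_
        set m := max (max c 1) N with hm
        have htm : t ∈ A m := monotone_spanningSets μ (le_max_right _ _) hN
        have h1m : (1:ℕ) ≤ m := le_trans (le_max_right c 1) (le_max_left _ _)
        have hcm : (c:ℝ≥0∞) ≤ (m:ℝ≥0∞) := by
          exact_mod_cast Nat.cast_le.mpr (le_trans (le_max_left c 1) (le_max_left _ _))
        refine le_trans ?_ (le_iSup (fun n => h n t) m)
        rw [hh]
        simp only [Set.indicator_of_mem htm, hJt]
        rw [min_eq_right le_top]
        calc (c:ℝ≥0∞) ≤ (m:ℝ≥0∞) := hcm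
          _ = (m:ℝ≥0∞) ^ (1:ℝ) := (ENNReal.rpow_one _).symm
          _ ≤ (m:ℝ≥0∞) ^ r := ENNReal.rpow_le_rpow_of_exponent_le (by exact_mod_cast h1m) hr1
      · obtain ⟨n, hn⟩ := ENNReal.exists_nat_gt hJt
        set m := max n N with hm
        have htm : t ∈ A m := monotone_spanningSets μ (le_max_right _ _) hN
        have hJm' : J t ≤ (m:ℝ≥0∞) :=
          le_trans hn.le (by exact_mod_cast Nat.cast_le.mpr (le_max_left n N))
        refine le_trans ?_ (le_iSup (fun n => h n t) m)
        rw [hh]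
        simp only [Set.indicator_of_mem htm]
        rw [min_eq_left hJm']
  -- monotone convergence
  have hmono : Monotone h := by
    intro n m hnm t
    rw [hh]
    by_cases ht : t ∈ A n
    · have htm : t ∈ A m := monotone_spanningSets μ hnm ht
      simp only [Set.indicator_of_mem ht, Set.indicator_of_mem htm]
      exact ENNReal.rpow_le_rpow (min_le_min le_rfl (by exact_mod_cast Nat.cast_le.mpr hnm)) hr0.le
    · simp [Set.indicator_of_notMem ht]
  have hgoal : ∫⁻ t, (J t ^ (1 / q)) ^ κ ∂μ = ∫⁻ t, J t ^ r ∂μ := by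
    refine lintegral_congr fun t => ?_
    rw [← ENNReal.rpow_mul, hκr]
  rw [hgoal]
  have : ∫⁻ t, J t ^ r ∂μ = ⨆ n, ∫⁻ t, h n t ∂μ := by
    rw [← lintegral_iSup hhm hmono]
    exact lintegral_congr fun t => (hsup t).symm
  rw [this]
  have hκ0 : (0:ℝ) < κ := by rw [hκ]; positivity
  refine ne_top_of_le_ne_top ?_ (iSup_le hbound)
  exact ENNReal.rpow_ne_top_of_nonneg hκ0.le hK
end

section
/- Let (T, μ), (S, ν) be σ-finite measure spaces, 1 ≤ q ≤ p < ∞, ψ : S → T measurable with ν ∘ ψ⁻¹ ≪ μ and J = d(ν∘ψ⁻¹)/dμ, and let P : S → ℝ be a measurable weight with 0 < c ≤ |P(s)| ≤ C < ∞ for a.e. s. Then the weighted composition operator f ↦ P·(f ∘ ψ) is bounded from L^p(T, μ) to L^q(S, ν) if and only if J^{1/q} ∈ L^κ(T, μ), where κ = pq/(p−q) for p > q and κ = ∞ for p = q. -/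
open MeasureTheory ENNReal

/-- Membership `g ∈ L^κ(T,μ)` for an `ℝ≥0∞`-valued `g`, with `κ = pq/(p-q)` for `p > q`
and `κ = ∞` for `p = q`. -/
noncomputable def memLkappa {T : Type*} [MeasurableSpace T] (μ : Measure T)
    (p q : ℝ) (g : T → ℝ≥0∞) : Prop :=
  if p = q then essSup g μ ≠ ⊤
  else ∫⁻ t, g t ^ (p * q / (p - q)) ∂μ ≠ ⊤

/-- A weighted composition operator `f ↦ P·(f∘ψ)` with weight bounded above and below
(`0 < c ≤ |P| ≤ C < ∞` a.e.) is bounded from `L^p(T,μ)` to `L^q(S,ν)` if and only if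
`J^{1/q} ∈ L^κ(T,μ)`, where `J = d(ν∘ψ⁻¹)/dμ`, `κ = pq/(p-q)` for `p > q`, `κ = ∞` for
`p = q`. -/
theorem weighted_composition_bounded_iff_rnDeriv_memLkappa
    {T S : Type*} [MeasurableSpace T] [MeasurableSpace S]
    (μ : Measure T) (ν : Measure S) [SigmaFinite μ] [SigmaFinite ν]
    (p q : ℝ) (hq : 1 ≤ q) (hpq : q ≤ p)
    (ψ : S → T) (hψ : Measurable ψ)
    (habs : Measure.map ψ ν ≪ μ)
    (J : T → ℝ≥0∞) (hJ : J = (Measure.map ψ ν).rnDeriv μ)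
    (P : S → ℝ) (hP : Measurable P)
    (c C : ℝ) (hc : 0 < c) (hcC : c ≤ C)
    (hPbdd : ∀ᵐ s ∂ν, c ≤ |P s| ∧ |P s| ≤ C) :
    (∃ K : ℝ≥0∞, K ≠ ⊤ ∧ ∀ f : T → ℝ, Measurable f →
        eLpNorm (fun s => P s * f (ψ s)) (ENNReal.ofReal q) ν ≤
          K * eLpNorm f (ENNReal.ofReal p) μ)
      ↔ memLkappa μ p q (fun t => J t ^ (1 / q)) := by
  have hq0 : 0 < q := lt_of_lt_of_le one_pos hq
  have hp0 : 0 < p := lt_of_lt_of_le hq0 hpq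
  have hqne : q ≠ 0 := hq0.ne'
  have hpne : p ≠ 0 := hp0.ne'
  have hq'0 : ENNReal.ofReal q ≠ 0 := by
    simp [ENNReal.ofReal_eq_zero, not_le, hq0]
  have hq't : ENNReal.ofReal q ≠ ⊤ := ENNReal.ofReal_ne_top
  have hp'0 : ENNReal.ofReal p ≠ 0 := by
    simp [ENNReal.ofReal_eq_zero, not_le, hp0]
  have hp't : ENNReal.ofReal p ≠ ⊤ := ENNReal.ofReal_ne_top
  have hJm : Measurable J := hJ ▸ Measure.measurable_rnDeriv _ _
  have hC0 : 0 < C := lt_of_lt_of_le hc hcC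
  -- norm of f as lintegral
  have hLp : ∀ f : T → ℝ, eLpNorm f (ENNReal.ofReal p) μ
      = (∫⁻ t, (‖f t‖₊ : ℝ≥0∞) ^ p ∂μ) ^ (1 / p) := by
    intro f
    rw [eLpNorm_eq_lintegral_rpow_enorm_toReal hp'0 hp't, ENNReal.toReal_ofReal hp0.le]
    rfl
  -- norm of f ∘ ψ as lintegral against J
  have hcomp : ∀ f : T → ℝ, Measurable f →
      eLpNorm (fun s => f (ψ s)) (ENNReal.ofReal q) ν
        = (∫⁻ t, J t * (‖f t‖₊ : ℝ≥0∞) ^ q ∂μ) ^ (1 / q) := by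
    intro f hf
    have hmeas : Measurable fun t => (‖f t‖₊ : ℝ≥0∞) ^ q :=
      ENNReal.continuous_rpow_const.measurable.comp hf.nnnorm.coe_nnreal_ennreal
    rw [eLpNorm_eq_lintegral_rpow_enorm_toReal hq'0 hq't, ENNReal.toReal_ofReal hq0.le]
    congr 1
    calc ∫⁻ s, (‖f (ψ s)‖₊ : ℝ≥0∞) ^ q ∂ν
        = ∫⁻ t, (‖f t‖₊ : ℝ≥0∞) ^ q ∂(Measure.map ψ ν) := (lintegral_map hmeas hψ).symm
      _ = ∫⁻ t, J t * (‖f t‖₊ : ℝ≥0∞) ^ q ∂μ := by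
          rw [hJ]
          exact (lintegral_rnDeriv_mul habs hmeas.aemeasurable).symm
  -- reduce the weighted boundedness to an lintegral statement
  have hmain : (∃ K : ℝ≥0∞, K ≠ ⊤ ∧ ∀ f : T → ℝ, Measurable f →
        eLpNorm (fun s => P s * f (ψ s)) (ENNReal.ofReal q) ν ≤
          K * eLpNorm f (ENNReal.ofReal p) μ)
      ↔ (∃ K : ℝ≥0∞, K ≠ ⊤ ∧ ∀ f : T → ℝ, Measurable f →
        (∫⁻ t, J t * (‖f t‖₊ : ℝ≥0∞) ^ q ∂μ) ^ (1 / q) ≤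
          K * (∫⁻ t, (‖f t‖₊ : ℝ≥0∞) ^ p ∂μ) ^ (1 / p)) := by
    constructor
    · rintro ⟨K, hK, h⟩
      have hc0' : ENNReal.ofReal c ≠ 0 := by simp [ENNReal.ofReal_eq_zero, not_le, hc]
      refine ⟨(ENNReal.ofReal c)⁻¹ * K, ENNReal.mul_ne_top
        (ENNReal.inv_ne_top.2 hc0') hK, fun f hf => ?_⟩
      have hkey : ENNReal.ofReal c * eLpNorm (fun s => f (ψ s)) (ENNReal.ofReal q) ν ≤
          eLpNorm (fun s => P s * f (ψ s)) (ENNReal.ofReal q) ν := by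
        have h1 : eLpNorm (fun s => c * f (ψ s)) (ENNReal.ofReal q) ν
            = ENNReal.ofReal c * eLpNorm (fun s => f (ψ s)) (ENNReal.ofReal q) ν := by
          have heq : (fun s => c * f (ψ s)) = c • fun s => f (ψ s) := rfl
          rw [heq, eLpNorm_const_smul, ← ofReal_norm, Real.norm_eq_abs,
            abs_of_pos hc]
        rw [← h1]
        refine eLpNorm_mono_ae ?_
        filter_upwards [hPbdd] with s hs
        simp only [Real.norm_eq_abs, abs_mul]
        exact mul_le_mul_of_nonneg_right (by rw [abs_of_pos hc]; exact hs.1) (abs_nonneg _)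
      calc (∫⁻ t, J t * (‖f t‖₊ : ℝ≥0∞) ^ q ∂μ) ^ (1 / q)
          = eLpNorm (fun s => f (ψ s)) (ENNReal.ofReal q) ν := (hcomp f hf).symm
        _ = (ENNReal.ofReal c)⁻¹ *
            (ENNReal.ofReal c * eLpNorm (fun s => f (ψ s)) (ENNReal.ofReal q) ν) := by
            rw [← mul_assoc, ENNReal.inv_mul_cancel hc0' ENNReal.ofReal_ne_top, one_mul]
        _ ≤ (ENNReal.ofReal c)⁻¹ *
            (K * eLpNorm f (ENNReal.ofReal p) μ) :=
            mul_le_mul_right (hkey.trans (h f hf)) _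
        _ = (ENNReal.ofReal c)⁻¹ * K * ((∫⁻ t, (‖f t‖₊ : ℝ≥0∞) ^ p ∂μ) ^ (1 / p)) := by
            rw [hLp, mul_assoc]
    · rintro ⟨K, hK, h⟩
      refine ⟨ENNReal.ofReal C * K, ENNReal.mul_ne_top ENNReal.ofReal_ne_top hK, fun f hf => ?_⟩
      have h1 : eLpNorm (fun s => C * f (ψ s)) (ENNReal.ofReal q) ν
          = ENNReal.ofReal C * eLpNorm (fun s => f (ψ s)) (ENNReal.ofReal q) ν := by
        have heq : (fun s => C * f (ψ s)) = C • fun s => f (ψ s) := rfl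
        rw [heq, eLpNorm_const_smul, ← ofReal_norm, Real.norm_eq_abs,
          abs_of_pos hC0]
      calc eLpNorm (fun s => P s * f (ψ s)) (ENNReal.ofReal q) ν
          ≤ eLpNorm (fun s => C * f (ψ s)) (ENNReal.ofReal q) ν := by
            refine eLpNorm_mono_ae ?_
            filter_upwards [hPbdd] with s hs
            simp only [Real.norm_eq_abs, abs_mul]
            exact mul_le_mul_of_nonneg_right (by rw [abs_of_pos hC0]; exact hs.2) (abs_nonneg _)
        _ = ENNReal.ofReal C * eLpNorm (fun s => f (ψ s)) (ENNReal.ofReal q) ν := h1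
        _ = ENNReal.ofReal C * (∫⁻ t, J t * (‖f t‖₊ : ℝ≥0∞) ^ q ∂μ) ^ (1 / q) := by
            rw [hcomp f hf]
        _ ≤ ENNReal.ofReal C * (K * (∫⁻ t, (‖f t‖₊ : ℝ≥0∞) ^ p ∂μ) ^ (1 / p)) :=
            mul_le_mul_right (h f hf) _
        _ = ENNReal.ofReal C * K * eLpNorm f (ENNReal.ofReal p) μ := by
            rw [hLp, mul_assoc]
  rw [hmain]
  rcases eq_or_lt_of_le hpq with hqp | hqp
  · -- case p = q
    have hpq' : p = q := hqp.symm
    simp only [memLkappa, if_pos hpq']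
    constructor
    · rintro ⟨K, hK, h⟩
      have hae : J ≤ᵐ[μ] fun _ => K ^ q := by
        refine ae_le_of_forall_setLIntegral_le_of_sigmaFinite hJm fun s hs hμs => ?_
        have hf := h (Set.indicator s (fun _ => (1:ℝ))) (measurable_const.indicator hs)
        have e1 : (fun t => J t * (‖Set.indicator s (fun _ => (1:ℝ)) t‖₊ : ℝ≥0∞) ^ q)
            = s.indicator J := by
          funext t
          by_cases ht : t ∈ s
          · simp [Set.indicator_of_mem ht]
          · simp [Set.indicator_of_notMem ht, ENNReal.zero_rpow_of_pos hq0]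
        have e2 : (fun t => (‖Set.indicator s (fun _ => (1:ℝ)) t‖₊ : ℝ≥0∞) ^ p)
            = s.indicator 1 := by
          funext t
          by_cases ht : t ∈ s
          · simp [Set.indicator_of_mem ht]
          · simp [Set.indicator_of_notMem ht, ENNReal.zero_rpow_of_pos hp0]
        have e1' : (∫⁻ t, J t * (‖Set.indicator s (fun _ => (1:ℝ)) t‖₊ : ℝ≥0∞) ^ q ∂μ)
            = ∫⁻ x in s, J x ∂μ := by
          rw [← lintegral_indicator hs _]
          exact lintegral_congr fun t => congrFun e1 t
        have e2' : (∫⁻ t, (‖Set.indicator s (fun _ => (1:ℝ)) t‖₊ : ℝ≥0∞) ^ p ∂μ) = μ s := by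
          rw [← lintegral_indicator_one hs]
          exact lintegral_congr fun t => congrFun e2 t
        have hf' : (∫⁻ x in s, J x ∂μ) ^ (1 / q) ≤ K * (μ s) ^ (1 / p) := by
          rw [← e1', ← e2']
          exact hf
        have h2 : ∫⁻ x in s, J x ∂μ ≤ K ^ q * μ s := by
          have h3 := ENNReal.rpow_le_rpow hf' hq0.le
          rwa [← ENNReal.rpow_mul, one_div_mul_cancel hqne, ENNReal.rpow_one,
            ENNReal.mul_rpow_of_nonneg _ _ hq0.le, ← ENNReal.rpow_mul, hpq',
            one_div_mul_cancel hqne, ENNReal.rpow_one] at h3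
        rw [setLIntegral_const]
        exact h2
      have hle : essSup (fun t => J t ^ (1/q)) μ ≤ K := by
        refine essSup_le_of_ae_le _ ?_
        filter_upwards [hae] with t ht
        calc J t ^ (1/q) ≤ (K ^ q) ^ (1/q) := ENNReal.rpow_le_rpow ht (by positivity)
          _ = K := by rw [← ENNReal.rpow_mul, mul_one_div_cancel hqne, ENNReal.rpow_one]
      exact ne_top_of_le_ne_top hK hle
    · intro hE
      refine ⟨essSup (fun t => J t ^ (1/q)) μ, hE, fun f hf => ?_⟩
      set E := essSup (fun t => J t ^ (1/q)) μ with hEdef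
      have hae : ∀ᵐ t ∂μ, J t ≤ E ^ q := by
        filter_upwards [ae_le_essSup (fun t => J t ^ (1/q)) (μ := μ)] with t ht
        calc J t = (J t ^ (1/q)) ^ q := by
              rw [← ENNReal.rpow_mul, one_div_mul_cancel hqne, ENNReal.rpow_one]
          _ ≤ E ^ q := ENNReal.rpow_le_rpow ht hq0.le
      calc (∫⁻ t, J t * (‖f t‖₊ : ℝ≥0∞) ^ q ∂μ) ^ (1 / q)
          ≤ (∫⁻ t, E ^ q * (‖f t‖₊ : ℝ≥0∞) ^ q ∂μ) ^ (1 / q) := by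
            refine ENNReal.rpow_le_rpow (lintegral_mono_ae ?_) (by positivity)
            filter_upwards [hae] with t ht
            exact mul_le_mul_left ht _
        _ = (E ^ q * ∫⁻ t, (‖f t‖₊ : ℝ≥0∞) ^ q ∂μ) ^ (1 / q) := by
            have hm : Measurable fun t => (‖f t‖₊ : ℝ≥0∞) ^ q :=
              ENNReal.continuous_rpow_const.measurable.comp hf.nnnorm.coe_nnreal_ennreal
            rw [lintegral_const_mul _ hm]
        _ = E * (∫⁻ t, (‖f t‖₊ : ℝ≥0∞) ^ p ∂μ) ^ (1 / p) := by
            rw [ENNReal.mul_rpow_of_nonneg _ _ (by positivity), ← ENNReal.rpow_mul,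
              mul_one_div_cancel hqne, ENNReal.rpow_one, hpq']
  · -- case q < p
    have hpnq : p ≠ q := ne_of_gt hqp
    have hsub : p - q ≠ 0 := sub_ne_zero.mpr hpnq
    have hsubpos : 0 < p - q := sub_pos.mpr hqp
    set r : ℝ := p / (p - q) with hrdef
    have hr0 : 0 < r := div_pos hp0 hsubpos
    have hr1 : 1 < r := (one_lt_div hsubpos).mpr (by linarith)
    simp only [memLkappa, if_neg hpnq]
    have hptw : ∀ x : ℝ≥0∞, (x ^ (1/q)) ^ (p * q / (p - q)) = x ^ r := by
      intro x
      rw [← ENNReal.rpow_mul]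
      congr 1
      rw [hrdef]
      field_simp
    rw [show (∫⁻ t, ((fun t => J t ^ (1/q)) t) ^ (p * q / (p - q)) ∂μ)
        = ∫⁻ t, J t ^ r ∂μ from lintegral_congr fun t => hptw (J t)]
    constructor
    · rintro ⟨K, hK, h⟩
      set B : ℕ → Set T := spanningSets μ with hBdef
      set g : ℕ → T → ℝ≥0∞ := fun n => (B n).indicator (fun t => min (J t) n) with hgdef
      have hgmeas : ∀ n, Measurable (g n) :=
        fun n => (hJm.min measurable_const).indicator (measurableSet_spanningSets μ n)
      have hgtop : ∀ n t, g n t ≠ ⊤ := by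
        intro n t
        by_cases ht : t ∈ B n
        · simp only [hgdef, Set.indicator_of_mem ht]
          exact ne_top_of_le_ne_top (ENNReal.natCast_ne_top n) (min_le_right _ _)
        · simp [hgdef, Set.indicator_of_notMem ht]
      have hgleJ : ∀ n t, g n t ≤ J t := by
        intro n t
        by_cases ht : t ∈ B n
        · simp only [hgdef, Set.indicator_of_mem ht]; exact min_le_left _ _
        · simp [hgdef, Set.indicator_of_notMem ht]
      set a : ℝ := (r - 1) / q with hadef
      have ha0 : 0 < a := div_pos (by linarith) hq0
      set F : ℕ → T → ℝ := fun n t => (g n t).toReal ^ a with hFdef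
      have hFmeas : ∀ n, Measurable (F n) :=
        fun n => (Real.continuous_rpow_const ha0.le).measurable.comp (hgmeas n).ennreal_toReal
      have hFnn : ∀ n t, (‖F n t‖₊ : ℝ≥0∞) = g n t ^ a := by
        intro n t
        rw [hFdef]
        rw [← enorm_eq_nnnorm, ← ofReal_norm, Real.norm_eq_abs,
          abs_of_nonneg (Real.rpow_nonneg ENNReal.toReal_nonneg a),
          ← ENNReal.ofReal_rpow_of_nonneg ENNReal.toReal_nonneg ha0.le,
          ENNReal.ofReal_toReal (hgtop n t)]
      have haq : a * q = r - 1 := by rw [hadef]; field_simp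
      have hap : a * p = r := by
        rw [hadef, hrdef]
        field_simp
        ring
      have hMtop : ∀ n, (∫⁻ t, g n t ^ r ∂μ) ≠ ⊤ := by
        intro n
        have hle : ∀ t, g n t ^ r ≤ (B n).indicator (fun _ => (n : ℝ≥0∞) ^ r) t := by
          intro t
          by_cases ht : t ∈ B n
          · simp only [hgdef, Set.indicator_of_mem ht]
            exact ENNReal.rpow_le_rpow (min_le_right _ _) hr0.le
          · simp [hgdef, Set.indicator_of_notMem ht, ENNReal.zero_rpow_of_pos hr0]
        refine ne_top_of_le_ne_top ?_ (lintegral_mono hle)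
        rw [lintegral_indicator (measurableSet_spanningSets μ n) _, setLIntegral_const]
        exact ENNReal.mul_ne_top (ENNReal.rpow_ne_top_of_nonneg hr0.le (ENNReal.natCast_ne_top n))
          (measure_spanningSets_lt_top μ n).ne
      have hMK : ∀ n, (∫⁻ t, g n t ^ r ∂μ) ≤ K ^ (p * q / (p - q)) := by
        intro n
        have hbase := h (F n) (hFmeas n)
        simp only [hFnn, ← ENNReal.rpow_mul, haq, hap] at hbase
        -- hbase : (∫⁻ t, J t * g n t ^ (r-1))^(1/q) ≤ K * (M n)^(1/p)
        have hMle : (∫⁻ t, g n t ^ r ∂μ) ≤ ∫⁻ t, J t * g n t ^ (r - 1) ∂μ := by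
          refine lintegral_mono fun t => ?_
          rcases eq_or_ne (g n t) 0 with h0 | h0
          · simp [h0, ENNReal.zero_rpow_of_pos hr0]
          · calc g n t ^ r = g n t ^ ((1:ℝ) + (r - 1)) := by norm_num
              _ = g n t ^ (1:ℝ) * g n t ^ (r - 1) := ENNReal.rpow_add _ _ h0 (hgtop n t)
              _ = g n t * g n t ^ (r - 1) := by rw [ENNReal.rpow_one]
              _ ≤ J t * g n t ^ (r - 1) := mul_le_mul_left (hgleJ n t) _
        set M : ℝ≥0∞ := ∫⁻ t, g n t ^ r ∂μ with hMdef
        have hkey : M ^ (1/q) ≤ K * M ^ (1/p) :=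
          (ENNReal.rpow_le_rpow hMle (by positivity)).trans hbase
        rcases eq_or_ne M 0 with hM0 | hM0
        · simp [hM0]
        · have hsplit : M ^ (1/q) = M ^ ((p - q)/(p * q)) * M ^ (1/p) := by
            rw [← ENNReal.rpow_add _ _ hM0 (hMtop n)]
            congr 1
            field_simp
            ring
          rw [hsplit] at hkey
          have hne0 : M ^ (1/p) ≠ 0 :=
            (ENNReal.rpow_pos (pos_iff_ne_zero.2 hM0) (hMtop n)).ne'
          have hnet : M ^ (1/p) ≠ ⊤ :=
            ENNReal.rpow_ne_top_of_nonneg (by positivity) (hMtop n)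
          have hcancel : M ^ ((p - q)/(p * q)) ≤ K :=
            (ENNReal.mul_le_mul_iff_left hne0 hnet).1 hkey
          have hexp : (p - q)/(p * q) * (p * q / (p - q)) = 1 := by
            field_simp
          calc M = (M ^ ((p - q)/(p * q))) ^ (p * q / (p - q)) := by
                rw [← ENNReal.rpow_mul, hexp, ENNReal.rpow_one]
            _ ≤ K ^ (p * q / (p - q)) :=
                ENNReal.rpow_le_rpow hcancel (div_nonneg (by positivity) hsubpos.le)
      have hmonog : ∀ m n, m ≤ n → ∀ t, g m t ≤ g n t := by
        intro m n hmn t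
        by_cases ht : t ∈ B m
        · have ht' : t ∈ B n := monotone_spanningSets μ hmn ht
          simp only [hgdef, Set.indicator_of_mem ht, Set.indicator_of_mem ht']
          exact min_le_min le_rfl (Nat.cast_le.2 hmn)
        · simp [hgdef, Set.indicator_of_notMem ht]
      have hsup : ∀ t, (⨆ n, g n t ^ r) = J t ^ r := by
        intro t
        obtain ⟨n₀, hn₀⟩ : ∃ n, t ∈ B n := ⟨_, mem_spanningSetsIndex μ t⟩
        refine le_antisymm (iSup_le fun n => ENNReal.rpow_le_rpow (hgleJ n t) hr0.le) ?_
        by_cases hJt : J t = ⊤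
        · rw [hJt, ENNReal.top_rpow_of_pos hr0]
          have hstep : ∀ n : ℕ, (n : ℝ≥0∞) ≤ ⨆ k, g k t ^ r := by
            intro n
            have hmem : t ∈ B (max n n₀) := monotone_spanningSets μ (le_max_right _ _) hn₀
            have hgval : g (max n n₀) t = ((max n n₀ : ℕ) : ℝ≥0∞) := by
              simp only [hgdef, Set.indicator_of_mem hmem, hJt]
              exact min_eq_right le_top
            calc (n : ℝ≥0∞) ≤ ((max n n₀ : ℕ) : ℝ≥0∞) := Nat.cast_le.2 (le_max_left _ _)
              _ ≤ ((max n n₀ : ℕ) : ℝ≥0∞) ^ r := by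
                  rcases Nat.eq_zero_or_pos (max n n₀) with h0 | h1
                  · simp [h0]
                  · conv_lhs => rw [← ENNReal.rpow_one ((max n n₀ : ℕ) : ℝ≥0∞)]
                    exact ENNReal.rpow_le_rpow_of_exponent_le
                      (by exact_mod_cast h1) hr1.le
              _ = g (max n n₀) t ^ r := by rw [hgval]
              _ ≤ ⨆ k, g k t ^ r := le_iSup (fun k => g k t ^ r) (max n n₀)
          calc (⊤ : ℝ≥0∞) = ⨆ n : ℕ, (n : ℝ≥0∞) := ENNReal.iSup_natCast.symm
            _ ≤ ⨆ k, g k t ^ r := iSup_le hstep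
        · obtain ⟨n₁, hn₁⟩ := ENNReal.exists_nat_gt hJt
          have hmem : t ∈ B (max n₁ n₀) := monotone_spanningSets μ (le_max_right _ _) hn₀
          have hgval : g (max n₁ n₀) t = J t := by
            simp only [hgdef, Set.indicator_of_mem hmem]
            exact min_eq_left (hn₁.le.trans (Nat.cast_le.2 (le_max_left _ _)))
          calc J t ^ r = g (max n₁ n₀) t ^ r := by rw [hgval]
            _ ≤ ⨆ k, g k t ^ r := le_iSup (fun k => g k t ^ r) (max n₁ n₀)
      have hfinal : ∫⁻ t, J t ^ r ∂μ ≤ K ^ (p * q / (p - q)) := by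
        have hgrm : ∀ n, Measurable fun t => g n t ^ r :=
          fun n => ENNReal.continuous_rpow_const.measurable.comp (hgmeas n)
        have hmc := lintegral_iSup (μ := μ) hgrm
          (fun m n hmn t => ENNReal.rpow_le_rpow (hmonog m n hmn t) hr0.le)
        calc ∫⁻ t, J t ^ r ∂μ = ∫⁻ t, ⨆ n, g n t ^ r ∂μ :=
              lintegral_congr fun t => (hsup t).symm
          _ = ⨆ n, ∫⁻ t, g n t ^ r ∂μ := hmc
          _ ≤ K ^ (p * q / (p - q)) := iSup_le hMK
      exact ne_top_of_le_ne_top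
        (ENNReal.rpow_ne_top_of_nonneg (div_nonneg (by positivity) hsubpos.le) hK) hfinal
    · intro hM
      refine ⟨(∫⁻ t, J t ^ r ∂μ) ^ ((p - q)/(p * q)),
        ENNReal.rpow_ne_top_of_nonneg (div_nonneg hsubpos.le (by positivity)) hM,
        fun f hf => ?_⟩
      have hconj : Real.HolderConjugate (p/q) r := by
        rw [Real.holderConjugate_iff_eq_conjExponent ((one_lt_div hq0).2 hqp), hrdef]
        field_simp
      have hmeas1 : AEMeasurable (fun t => (‖f t‖₊ : ℝ≥0∞) ^ q) μ :=
        (ENNReal.continuous_rpow_const.measurable.comp hf.nnnorm.coe_nnreal_ennreal).aemeasurable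
      have hH := ENNReal.lintegral_mul_le_Lp_mul_Lq μ hconj hmeas1 hJm.aemeasurable
      simp only [Pi.mul_apply] at hH
      have e1 : (∫⁻ t, ((‖f t‖₊ : ℝ≥0∞) ^ q) ^ (p/q) ∂μ) = ∫⁻ t, (‖f t‖₊ : ℝ≥0∞) ^ p ∂μ :=
        lintegral_congr fun t => by
          rw [← ENNReal.rpow_mul]
          congr 1
          field_simp
      rw [e1, one_div_div] at hH
      have hH' : (∫⁻ t, J t * (‖f t‖₊ : ℝ≥0∞) ^ q ∂μ)
          ≤ (∫⁻ t, (‖f t‖₊ : ℝ≥0∞) ^ p ∂μ) ^ (q/p) * (∫⁻ t, J t ^ r ∂μ) ^ (1/r) := by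
        refine le_trans (le_of_eq (lintegral_congr fun t => mul_comm _ _)) hH
      calc (∫⁻ t, J t * (‖f t‖₊ : ℝ≥0∞) ^ q ∂μ) ^ (1/q)
          ≤ ((∫⁻ t, (‖f t‖₊ : ℝ≥0∞) ^ p ∂μ) ^ (q/p) * (∫⁻ t, J t ^ r ∂μ) ^ (1/r)) ^ (1/q) :=
            ENNReal.rpow_le_rpow hH' (by positivity)
        _ = (∫⁻ t, J t ^ r ∂μ) ^ ((p - q)/(p * q)) *
              (∫⁻ t, (‖f t‖₊ : ℝ≥0∞) ^ p ∂μ) ^ (1/p) := by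
            have hx1 : q/p * (1/q) = 1/p := by field_simp
            have hx2 : 1/r * (1/q) = (p - q)/(p * q) := by
              rw [hrdef, one_div_div, div_mul_div_comm, mul_one]
            rw [ENNReal.mul_rpow_of_nonneg _ _ (by positivity), ← ENNReal.rpow_mul,
              ← ENNReal.rpow_mul, hx1, hx2, mul_comm]
end

section
/- Let (S, ν), (X, η), (Y, η') be σ-finite measure spaces, Ω ⊆ S × X and Ω' ⊆ S × Y measurable, 1 ≤ α ≤ β < ∞, 1 ≤ q ≤ p < ∞. Suppose u : Ω → Y satisfies: for ν-a.e. s, the map u(s,·) : Ω_s → Ω'_s is measurable, the pushforward of η under u(s,·) restricted to Ω_s is absolutely continuous with respect to η' with density J_u(s, ·), and the identity map on S is used in the first coordinate (i.e., φ(s,x) = (s, u(s,x))). If the function (s,y) ↦ J_u(s,y)^{1/α} belongs to the mixed norm space L^{κ, βα/(β−α)}(Ω') in the variables (s, y) (with κ = pq/(p−q), and with the convention of L^∞ norms when exponents coincide), then the composition operator C_φ f = f ∘ φ is bounded from L^{p,β}(Ω') to L^{q,α}(Ω). -/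
open MeasureTheory ENNReal

/-- `L^e` "norm" of an `ℝ≥0∞`-valued function, with the essential supremum when `e = ∞`. -/
noncomputable def eNormExp {Z : Type*} [MeasurableSpace Z] (e : ℝ≥0∞) (m : Measure Z)
    (g : Z → ℝ≥0∞) : ℝ≥0∞ :=
  if e = ⊤ then essSup g m else (∫⁻ z, g z ^ e.toReal ∂m) ^ (1 / e.toReal)

/-- The mixed norm over `Ω' ⊆ S × Y` with (possibly infinite) exponents `Q` (outer) and
`A` (inner, over the slices `Ω'_s`) of an `ℝ≥0∞`-valued function. -/
noncomputable def mixedNormE {S Y : Type*} [MeasurableSpace S] [MeasurableSpace Y]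
    (ν : Measure S) (η' : Measure Y) (Ω' : Set (S × Y)) (Q A : ℝ≥0∞)
    (g : S × Y → ℝ≥0∞) : ℝ≥0∞ :=
  eNormExp Q ν (fun s => eNormExp A (η'.restrict {y | (s, y) ∈ Ω'}) (fun y => g (s, y)))

/-- The mixed norm `‖f‖_{q,α}` of a real-valued `f` over `Ω ⊆ S × X`. -/
noncomputable def mixedNorm {S X : Type*} [MeasurableSpace S] [MeasurableSpace X]
    (ν : Measure S) (η : Measure X) (Ω : Set (S × X)) (q α : ℝ)
    (f : S × X → ℝ) : ℝ≥0∞ :=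
  (∫⁻ s, (∫⁻ x in {x | (s, x) ∈ Ω}, ENNReal.ofReal |f (s, x)| ^ α ∂η) ^ (q / α) ∂ν)
    ^ (1 / q)

lemma eNormExp_top {Z : Type*} [MeasurableSpace Z] (m : Measure Z) (g : Z → ℝ≥0∞) :
    eNormExp ⊤ m g = essSup g m := if_pos rfl

lemma eNormExp_ne_top {Z : Type*} [MeasurableSpace Z] {e : ℝ≥0∞} (he : e ≠ ⊤)
    (m : Measure Z) (g : Z → ℝ≥0∞) :
    eNormExp e m g = (∫⁻ z, g z ^ e.toReal ∂m) ^ (1 / e.toReal) := if_neg he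

lemma holder_step {Z : Type*} [MeasurableSpace Z] (μ : Measure Z)
    {F N : Z → ℝ≥0∞} {a b : ℝ} (ha : 1 ≤ a) (hab : a ≤ b)
    (hF : AEMeasurable F μ) (hN : b ≠ a → AEMeasurable N μ) :
    (∫⁻ z, (F z * N z) ^ a ∂μ) ^ (1 / a) ≤
      (∫⁻ z, F z ^ b ∂μ) ^ (1 / b) *
        eNormExp (if b = a then ⊤ else ENNReal.ofReal (b * a / (b - a))) μ N := by
  have ha0 : (0 : ℝ) < a := lt_of_lt_of_le one_pos ha
  have hb0 : (0 : ℝ) < b := lt_of_lt_of_le ha0 hab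
  by_cases hba : b = a
  · subst hba
    rw [if_pos rfl]
    simp only [eNormExp]
    rw [if_pos trivial]
    set C := essSup N μ with hC
    by_cases hCtop : C = ⊤
    · by_cases hF0 : ∫⁻ z, F z ^ b ∂μ = 0
      · have hF0' : ∀ᵐ z ∂μ, F z = 0 := by
          have := (lintegral_eq_zero_iff' (hF.pow_const b)).mp hF0
          filter_upwards [this] with z hz
          simpa [ENNReal.rpow_eq_zero_iff, hb0, hb0.not_gt] using hz
        have : (∫⁻ z, (F z * N z) ^ b ∂μ) = 0 := by
          rw [← lintegral_zero (μ := μ)]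
          apply lintegral_congr_ae
          filter_upwards [hF0'] with z hz
          simp [hz, ENNReal.zero_rpow_of_pos hb0]
        rw [this, ENNReal.zero_rpow_of_pos (by positivity)]
        exact zero_le
      · have : (∫⁻ z, F z ^ b ∂μ) ^ (1 / b) ≠ 0 := by
          simp [ENNReal.rpow_eq_zero_iff, hF0, hb0, one_div, hb0.le]
        rw [hCtop, ENNReal.mul_top this]
        exact le_top
    · calc (∫⁻ z, (F z * N z) ^ b ∂μ) ^ (1 / b)
          ≤ (∫⁻ z, F z ^ b * C ^ b ∂μ) ^ (1 / b) := by
            apply ENNReal.rpow_le_rpow _ (by positivity)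
            apply lintegral_mono_ae
            filter_upwards [ENNReal.ae_le_essSup N] with z hz
            rw [← ENNReal.mul_rpow_of_nonneg _ _ hb0.le]
            exact ENNReal.rpow_le_rpow (mul_le_mul_right hz _) hb0.le
        _ = ((∫⁻ z, F z ^ b ∂μ) * C ^ b) ^ (1 / b) := by
            rw [lintegral_mul_const' _ _ (ENNReal.rpow_ne_top_of_nonneg hb0.le hCtop)]
        _ = (∫⁻ z, F z ^ b ∂μ) ^ (1 / b) * C := by
            rw [ENNReal.mul_rpow_of_nonneg _ _ (by positivity), ← ENNReal.rpow_mul,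
              mul_one_div, div_self hb0.ne', ENNReal.rpow_one]
  · have hab' : a < b := lt_of_le_of_ne hab fun h => hba h.symm
    have hbane : (0:ℝ) < b - a := by linarith
    set r : ℝ := b / a with hr
    set s : ℝ := b / (b - a) with hs
    have hrs : r.HolderConjugate s := by
      rw [Real.holderConjugate_iff]
      constructor
      · rw [hr]; rw [lt_div_iff₀ ha0]; linarith
      · rw [hr, hs]
        field_simp
        ring
    have hkey := ENNReal.lintegral_mul_le_Lp_mul_Lq μ hrs (hF.pow_const a)
      ((hN hba).pow_const a)
    have e1 : (∫⁻ z, (F z * N z) ^ a ∂μ) =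
        ∫⁻ z, ((fun z => F z ^ a) * fun z => N z ^ a) z ∂μ := by
      apply lintegral_congr fun z => ?_
      simp [ENNReal.mul_rpow_of_nonneg _ _ ha0.le]
    have e2 : (∫⁻ z, (F z ^ a) ^ r ∂μ) = ∫⁻ z, F z ^ b ∂μ := by
      apply lintegral_congr fun z => ?_
      rw [← ENNReal.rpow_mul]
      congr 1
      rw [hr]; field_simp
    set κ : ℝ := b * a / (b - a) with hκ
    have e3 : (∫⁻ z, (N z ^ a) ^ s ∂μ) = ∫⁻ z, N z ^ κ ∂μ := by
      apply lintegral_congr fun z => ?_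
      rw [← ENNReal.rpow_mul]
      congr 1
      rw [hs, hκ]; field_simp
    rw [← e1, e2, e3] at hkey
    have hmain := ENNReal.rpow_le_rpow hkey (le_of_lt (by positivity : (0:ℝ) < 1 / a))
    refine le_trans hmain ?_
    rw [ENNReal.mul_rpow_of_nonneg _ _ (by positivity), ← ENNReal.rpow_mul,
      ← ENNReal.rpow_mul]
    have er : 1 / r * (1 / a) = 1 / b := by rw [hr]; field_simp; try ring
    have es : 1 / s * (1 / a) = 1 / κ := by rw [hs, hκ]; field_simp; try ring
    rw [er, es, if_neg hba, eNormExp, if_neg ENNReal.ofReal_ne_top,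
      ENNReal.toReal_ofReal (by positivity)]

lemma measurable_slice_lintegral {S Y : Type*} [MeasurableSpace S] [MeasurableSpace Y]
    (η' : Measure Y) [SigmaFinite η'] {Ω' : Set (S × Y)} (hΩ' : MeasurableSet Ω')
    {w : S × Y → ℝ≥0∞} (hw : Measurable w) :
    Measurable fun s => ∫⁻ y in {y | (s, y) ∈ Ω'}, w (s, y) ∂η' := by
  have h : ∀ s, ∫⁻ y in {y | (s, y) ∈ Ω'}, w (s, y) ∂η'
      = ∫⁻ y, Ω'.indicator w (s, y) ∂η' := by
    intro s
    have hms : MeasurableSet {y | (s, y) ∈ Ω'} := measurable_prodMk_left hΩ'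
    rw [← lintegral_indicator hms]
    congr 1
  simp_rw [h]
  exact Measurable.lintegral_prod_right (hw.indicator hΩ')

lemma measurable_slice_essSup {S Y : Type*} [MeasurableSpace S] [MeasurableSpace Y]
    (η' : Measure Y) [SigmaFinite η'] {Ω' : Set (S × Y)} (hΩ' : MeasurableSet Ω')
    {w : S × Y → ℝ≥0∞} (hw : Measurable w) :
    Measurable fun s => essSup (fun y => w (s, y)) (η'.restrict {y | (s, y) ∈ Ω'}) := by
  classical
  have key : ∀ s, essSup (fun y => w (s, y)) (η'.restrict {y | (s, y) ∈ Ω'}) =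
      ⨅ q : ℚ, if η' (Prod.mk s ⁻¹' ({z | (Real.toNNReal q : ℝ≥0∞) < w z} ∩ Ω')) = 0
        then (Real.toNNReal q : ℝ≥0∞) else ⊤ := by
    intro s
    rw [essSup_eq_sInf]
    have hset : ∀ c : ℝ≥0∞, (η'.restrict {y | (s, y) ∈ Ω'}) {y | c < w (s, y)} =
        η' (Prod.mk s ⁻¹' ({z | c < w z} ∩ Ω')) := by
      intro c
      rw [Measure.restrict_apply
        (measurableSet_lt measurable_const (hw.comp measurable_prodMk_left) :
          MeasurableSet {y : Y | c < w (s, y)})]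
      congr 1
    apply le_antisymm
    · refine le_iInf fun q => ?_
      by_cases hq : η' (Prod.mk s ⁻¹' ({z | (Real.toNNReal q : ℝ≥0∞) < w z} ∩ Ω')) = 0
      · rw [if_pos hq]
        apply sInf_le
        show _ = 0
        rw [hset]
        exact hq
      · rw [if_neg hq]
        exact le_top
    · refine le_sInf fun c hc => ?_
      by_contra hlt
      push_neg at hlt
      obtain ⟨q, _, hcq, hqi⟩ := ENNReal.lt_iff_exists_rat_btwn.mp hlt
      have hsub : {y : Y | (Real.toNNReal q : ℝ≥0∞) < w (s, y)} ⊆ {y | c < w (s, y)} :=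
        fun y hy => lt_trans hcq hy
      have hmem : (η'.restrict {y | (s, y) ∈ Ω'}) {y | (Real.toNNReal q : ℝ≥0∞) < w (s, y)} = 0 :=
        measure_mono_null hsub hc
      rw [hset] at hmem
      have hle := iInf_le (fun q : ℚ =>
        if η' (Prod.mk s ⁻¹' ({z | (Real.toNNReal q : ℝ≥0∞) < w z} ∩ Ω')) = 0
          then (Real.toNNReal q : ℝ≥0∞) else ⊤) q
      rw [if_pos hmem] at hle
      exact absurd (lt_of_le_of_lt hle hqi) (lt_irrefl _)
  simp_rw [key]
  apply Measurable.iInf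
  intro q
  have hT : MeasurableSet ({z : S × Y | (Real.toNNReal q : ℝ≥0∞) < w z} ∩ Ω') :=
    (measurableSet_lt measurable_const hw).inter hΩ'
  have hm : Measurable fun s =>
      η' (Prod.mk s ⁻¹' ({z | (Real.toNNReal q : ℝ≥0∞) < w z} ∩ Ω')) :=
    measurable_measure_prodMk_left hT
  exact Measurable.ite (hm (measurableSet_singleton 0)) measurable_const measurable_const

/-- Sufficiency for the composition operator on mixed norm spaces induced by
`φ(s,x) = (s, u(s,x))`: if `(s,y) ↦ J_u(s,y)^{1/α}` lies in `L^{κ, βα/(β-α)}(Ω')`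
(`κ = pq/(p-q)`, with `L^∞` conventions for coinciding exponents), then
`C_φ : L^{p,β}(Ω') → L^{q,α}(Ω)` is bounded. -/
theorem composition_mixed_norm_bounded
    {S X Y : Type*} [MeasurableSpace S] [MeasurableSpace X] [MeasurableSpace Y]
    (ν : Measure S) (η : Measure X) (η' : Measure Y)
    [SigmaFinite ν] [SigmaFinite η] [SigmaFinite η']
    (Ω : Set (S × X)) (hΩ : MeasurableSet Ω)
    (Ω' : Set (S × Y)) (hΩ' : MeasurableSet Ω')
    (p q α β : ℝ) (hα : 1 ≤ α) (hαβ : α ≤ β) (hq : 1 ≤ q) (hqp : q ≤ p)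
    (u : S × X → Y) (hu : Measurable u)
    (Ju : S × Y → ℝ≥0∞) (hJu : Measurable Ju)
    (hpush : ∀ᵐ s ∂ν,
      Measure.map (fun x => u (s, x)) (η.restrict {x | (s, x) ∈ Ω}) =
        (η'.restrict {y | (s, y) ∈ Ω'}).withDensity (fun y => Ju (s, y)))
    (hfin : mixedNormE ν η' Ω'
        (if p = q then ⊤ else ENNReal.ofReal (p * q / (p - q)))
        (if β = α then ⊤ else ENNReal.ofReal (β * α / (β - α)))
        (fun x => Ju x ^ (1 / α)) ≠ ⊤) :
    ∃ K : ℝ≥0∞, K ≠ ⊤ ∧ ∀ f : S × Y → ℝ, Measurable f →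
      mixedNorm ν η Ω q α (fun x => f (x.1, u x)) ≤
        K * mixedNorm ν η' Ω' p β f := by
  classical
  have hα0 : (0 : ℝ) < α := lt_of_lt_of_le one_pos hα
  have hβ0 : (0 : ℝ) < β := lt_of_lt_of_le hα0 hαβ
  have hq0 : (0 : ℝ) < q := lt_of_lt_of_le one_pos hq
  have hp0 : (0 : ℝ) < p := lt_of_lt_of_le hq0 hqp
  set A : ℝ≥0∞ := if β = α then ⊤ else ENNReal.ofReal (β * α / (β - α)) with hA
  set Q : ℝ≥0∞ := if p = q then ⊤ else ENNReal.ofReal (p * q / (p - q)) with hQ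
  set N : S → ℝ≥0∞ := fun s =>
    eNormExp A (η'.restrict {y | (s, y) ∈ Ω'}) (fun y => Ju (s, y) ^ (1 / α)) with hN
  have hKdef : mixedNormE ν η' Ω' Q A (fun x => Ju x ^ (1 / α)) = eNormExp Q ν N := by
    rw [hN]; simp only [mixedNormE]
  have hNmeas : Measurable N := by
    by_cases hβα : β = α
    · have hA' : A = ⊤ := by rw [hA, if_pos hβα]
      simp only [hN, hA', eNormExp_top]
      exact measurable_slice_essSup η' hΩ' (w := fun z => Ju z ^ (1 / α)) (hJu.pow_const (1 / α))
    · have hAne : A ≠ ⊤ := by rw [hA, if_neg hβα]; exact ENNReal.ofReal_ne_top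
      simp only [hN, eNormExp_ne_top hAne]
      exact (measurable_slice_lintegral η' hΩ'
        ((hJu.pow_const (1 / α)).pow_const A.toReal)).pow_const _
  refine ⟨eNormExp Q ν N, by rw [← hKdef]; exact hfin, fun f hf => ?_⟩
  set F : S → ℝ≥0∞ := fun s =>
    (∫⁻ y in {y | (s, y) ∈ Ω'}, ENNReal.ofReal |f (s, y)| ^ β ∂η') ^ (1 / β) with hF
  have hFmeas : Measurable F := by
    simp only [hF]
    exact (measurable_slice_lintegral η' hΩ'
      ((ENNReal.measurable_ofReal.comp hf.abs).pow_const β)).pow_const _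
  set I : S → ℝ≥0∞ := fun s =>
    ∫⁻ x in {x | (s, x) ∈ Ω}, ENNReal.ofReal |f (s, u (s, x))| ^ α ∂η with hI
  have h1 : ∀ᵐ s ∂ν, I s ^ (1 / α) ≤ F s * N s := by
    filter_upwards [hpush] with s hs
    have hgmeas : Measurable fun y => ENNReal.ofReal |f (s, y)| ^ α :=
      (ENNReal.measurable_ofReal.comp ((hf.comp measurable_prodMk_left).abs)).pow_const α
    have humeas : Measurable fun x => u (s, x) := hu.comp measurable_prodMk_left
    have hJumeas : Measurable fun y => Ju (s, y) := hJu.comp measurable_prodMk_left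
    have e1 : I s = ∫⁻ y in {y | (s, y) ∈ Ω'},
        (ENNReal.ofReal |f (s, y)| * Ju (s, y) ^ (1 / α)) ^ α ∂η' := by
      have c1 : I s = ∫⁻ y, ENNReal.ofReal |f (s, y)| ^ α
          ∂(Measure.map (fun x => u (s, x)) (η.restrict {x | (s, x) ∈ Ω})) := by
        rw [lintegral_map hgmeas humeas]
      rw [c1, hs, lintegral_withDensity_eq_lintegral_mul _ hJumeas hgmeas]
      refine lintegral_congr fun y => ?_
      simp only [Pi.mul_apply]
      rw [ENNReal.mul_rpow_of_nonneg _ _ hα0.le, ← ENNReal.rpow_mul,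
        one_div_mul_cancel hα0.ne', ENNReal.rpow_one, mul_comm]
    rw [e1]
    have hstep := holder_step (η'.restrict {y | (s, y) ∈ Ω'})
      (F := fun y => ENNReal.ofReal |f (s, y)|) (N := fun y => Ju (s, y) ^ (1 / α))
      hα hαβ
      ((ENNReal.measurable_ofReal.comp ((hf.comp measurable_prodMk_left).abs)).aemeasurable)
      (fun _ => ((hJu.comp measurable_prodMk_left).pow_const (1 / α)).aemeasurable)
    rw [← hA] at hstep
    exact hstep
  have lhs_eq : mixedNorm ν η Ω q α (fun x => f (x.1, u x)) =
      (∫⁻ s, I s ^ (q / α) ∂ν) ^ (1 / q) := by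
    rw [hI]; simp only [mixedNorm]
  have h2 : (∫⁻ s, I s ^ (q / α) ∂ν) ^ (1 / q) ≤
      (∫⁻ s, (F s * N s) ^ q ∂ν) ^ (1 / q) := by
    refine ENNReal.rpow_le_rpow (lintegral_mono_ae ?_) (by positivity)
    filter_upwards [h1] with s hs
    have : I s ^ (q / α) = (I s ^ (1 / α)) ^ q := by
      rw [← ENNReal.rpow_mul]
      congr 1
      field_simp
    rw [this]
    exact ENNReal.rpow_le_rpow hs hq0.le
  have h3 := holder_step ν (F := F) (N := N) hq hqp hFmeas.aemeasurable
    (fun _ => hNmeas.aemeasurable)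
  rw [← hQ] at h3
  have rhs_eq : (∫⁻ s, F s ^ p ∂ν) ^ (1 / p) = mixedNorm ν η' Ω' p β f := by
    rw [mixedNorm]
    congr 1
    refine lintegral_congr fun s => ?_
    simp only [hF]
    rw [← ENNReal.rpow_mul]
    congr 1
    field_simp
  rw [lhs_eq]
  refine le_trans h2 (le_trans h3 ?_)
  rw [rhs_eq, mul_comm]
end

section
/- Let (T, μ), (S, ν) be σ-finite measure spaces, 1 ≤ q ≤ p < ∞, and let λ be a measure on a measurable set F ⊆ S × T that is absolutely continuous with respect to the product measure ν × μ, with density J(s,t). Let P : F → ℝ be measurable. If the function t ↦ ( ∫_{F_t} |P(s,t)|^q J(s,t) dν(s) )^{1/q} belongs to L^κ(T, μ) (κ = pq/(p−q) for p > q, κ = ∞ for p = q), where F_t = {s : (s,t) ∈ F}, then the operator M_F[f](s,t) = P(s,t) f(t) is bounded from L^p(T, μ) to L^q(F, λ), with ‖M_F f‖_{L^q(F,λ)} ≤ ‖ (∫_{F_t} |P|^q J dν)^{1/q} ‖_{L^κ(T)} ‖f‖_{L^p(T)}. -/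
open MeasureTheory ENNReal

/-- Sufficiency for the mixed operator `M_F[f](s,t) = P(s,t) f(t)`: if
`t ↦ (∫_{F_t} |P(s,t)|^q J(s,t) dν(s))^{1/q} ∈ L^κ(T,μ)`, where `λ ≪ ν × μ` with
density `J`, then `M_F` is bounded from `L^p(T,μ)` to `L^q(F,λ)` with norm at most
`‖(∫_{F_t} |P|^q J dν)^{1/q}‖_{L^κ(T)}`. -/
theorem mixed_operator_bounded_of_memLkappa
    {T S : Type*} [MeasurableSpace T] [MeasurableSpace S]
    (μ : Measure T) (ν : Measure S) [SigmaFinite μ] [SigmaFinite ν]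
    (p q : ℝ) (hq : 1 ≤ q) (hqp : q ≤ p)
    (F : Set (S × T)) (hF : MeasurableSet F)
    (J : S × T → ℝ≥0∞) (hJ : Measurable J)
    (lam : Measure (S × T))
    (hlam : lam = ((ν.prod μ).withDensity J).restrict F)
    (P : S × T → ℝ) (hP : Measurable P)
    (hfin : lKappaNorm μ p q
        (fun t => (∫⁻ s in {s | (s, t) ∈ F},
          ENNReal.ofReal |P (s, t)| ^ q * J (s, t) ∂ν) ^ (1 / q)) ≠ ⊤) :
    ∀ f : T → ℝ, Measurable f →
      eLpNorm (fun x : S × T => P x * f x.2) (ENNReal.ofReal q) lam ≤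
        lKappaNorm μ p q
          (fun t => (∫⁻ s in {s | (s, t) ∈ F},
            ENNReal.ofReal |P (s, t)| ^ q * J (s, t) ∂ν) ^ (1 / q)) *
          eLpNorm f (ENNReal.ofReal p) μ := by
  intro f hf
  have hq0 : (0:ℝ) < q := lt_of_lt_of_le one_pos hq
  have hp0 : (0:ℝ) < p := lt_of_lt_of_le hq0 hqp
  set c : T → ℝ≥0∞ := fun t => ENNReal.ofReal |f t| with hc_def
  have hc : Measurable c := hf.abs.ennreal_ofReal
  set h0 : S × T → ℝ≥0∞ := fun x => ENNReal.ofReal |P x| ^ q * J x with hh0_def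
  have hh0 : Measurable h0 := (hP.abs.ennreal_ofReal.pow_const q).mul hJ
  set g : T → ℝ≥0∞ := fun t =>
    (∫⁻ s in {s | (s, t) ∈ F}, ENNReal.ofReal |P (s, t)| ^ q * J (s, t) ∂ν) ^ (1 / q) with hg_def
  have hFt : ∀ t : T, MeasurableSet {s : S | (s, t) ∈ F} := fun t =>
    hF.preimage (measurable_prodMk_right)
  -- rewrite g via indicators
  have hg_ind : ∀ t, g t = (∫⁻ s, F.indicator h0 (s, t) ∂ν) ^ (1 / q) := by
    intro t
    have : ∫⁻ s, F.indicator h0 (s, t) ∂ν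
        = ∫⁻ s, ({s : S | (s, t) ∈ F}.indicator (fun s => h0 (s, t))) s ∂ν := by
      refine lintegral_congr fun s => ?_
      by_cases hs : (s, t) ∈ F <;> simp [Set.indicator_apply, hs]
    rw [hg_def]
    simp only [this, lintegral_indicator (hFt t)]
    rfl
  have hg : Measurable g := by
    have : Measurable fun t => ∫⁻ s, F.indicator h0 (s, t) ∂ν :=
      (hh0.indicator hF).lintegral_prod_left'
    simpa only [funext hg_ind] using this.pow_const (1 / q)
  -- Step 1: compute the left-hand side
  have key : eLpNorm (fun x : S × T => P x * f x.2) (ENNReal.ofReal q) lam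
      = (∫⁻ t, g t ^ q * c t ^ q ∂μ) ^ (1 / q) := by
    rw [eLpNorm_eq_lintegral_rpow_enorm_toReal (by simp [hq0]) (by simp),
      ENNReal.toReal_ofReal hq0.le]
    congr 1
    have hmeas2 : Measurable fun x : S × T => ‖P x * f x.2‖ₑ ^ q :=
      ((hP.mul (hf.comp measurable_snd)).enorm).pow_const q
    set G : S × T → ℝ≥0∞ := fun x => J x * ‖P x * f x.2‖ₑ ^ q with hG_def
    have hG : Measurable G := hJ.mul hmeas2
    rw [hlam, restrict_withDensity hF,
      lintegral_withDensity_eq_lintegral_mul _ hJ hmeas2,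
      ← lintegral_indicator hF]
    rw [show (J * fun x : S × T => ‖P x * f x.2‖ₑ ^ q) = G from rfl]
    rw [MeasureTheory.lintegral_prod_symm _ ((hG.indicator hF)).aemeasurable]
    have inner_eq : ∀ t : T,
        (∫⁻ s, F.indicator G (s, t) ∂ν)
          = g t ^ q * c t ^ q := by
      intro t
      have e1 : ∀ s : S,
          F.indicator G (s, t)
            = c t ^ q * F.indicator h0 (s, t) := by
        intro s
        by_cases hs : (s, t) ∈ F
        · simp only [Set.indicator_of_mem hs, hG_def, hh0_def, hc_def]
          rw [enorm_mul, ENNReal.mul_rpow_of_nonneg _ _ hq0.le]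
          simp only [Real.enorm_eq_ofReal_abs]
          ring
        · simp [Set.indicator_of_notMem hs]
      simp only [e1]
      rw [lintegral_const_mul' _ _
        (ENNReal.rpow_ne_top_of_nonneg hq0.le ENNReal.ofReal_ne_top)]
      rw [hg_ind t, ← ENNReal.rpow_mul, one_div_mul_cancel hq0.ne', ENNReal.rpow_one,
        mul_comm]
    simp only [inner_eq]
  rw [key]
  -- Step 2: express the L^p norm of f
  have hfp : eLpNorm f (ENNReal.ofReal p) μ = (∫⁻ t, c t ^ p ∂μ) ^ (1 / p) := by
    rw [eLpNorm_eq_lintegral_rpow_enorm_toReal (by simp [hp0]) (by simp),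
      ENNReal.toReal_ofReal hp0.le]
    congr 1
    congr 1 with t
    rw [hc_def, Real.enorm_eq_ofReal_abs]
  rw [hfp]
  -- Step 3: Hölder's inequality (or trivial estimate when p = q)
  by_cases hpq : p = q
  · -- p = q : use the essential supremum bound
    rw [lKappaNorm, if_pos hpq]
    subst hpq
    calc (∫⁻ t, g t ^ p * c t ^ p ∂μ) ^ (1 / p)
        ≤ ((essSup g μ) ^ p * ∫⁻ t, c t ^ p ∂μ) ^ (1 / p) := by
          apply ENNReal.rpow_le_rpow _ (by positivity)
          rw [← lintegral_const_mul _ (hc.pow_const p)]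
          refine lintegral_mono_ae ?_
          filter_upwards [ae_le_essSup g] with t ht
          exact mul_le_mul_left (ENNReal.rpow_le_rpow ht hp0.le) _
      _ = essSup g μ * (∫⁻ t, c t ^ p ∂μ) ^ (1 / p) := by
          rw [ENNReal.mul_rpow_of_nonneg _ _ (by positivity),
            ← ENNReal.rpow_mul, mul_one_div_cancel hp0.ne', ENNReal.rpow_one]
  · -- q < p : Hölder with conjugate exponents p/(p-q) and p/q
    have hlt : q < p := lt_of_le_of_ne hqp (Ne.symm hpq)
    have hpq_sub : (0:ℝ) < p - q := by linarith
    rw [lKappaNorm, if_neg hpq]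
    have hconj : (p / (p - q)).HolderConjugate (p / q) := by
      rw [Real.holderConjugate_iff]
      constructor
      · rw [lt_div_iff₀ hpq_sub]; linarith
      · rw [inv_div, inv_div, ← add_div]
        field_simp
        ring
    have holder := ENNReal.lintegral_mul_le_Lp_mul_Lq μ hconj
      ((hg.pow_const q).aemeasurable) ((hc.pow_const q).aemeasurable)
    have e1 : ∀ t : T, (g t ^ q) ^ (p / (p - q)) = g t ^ (p * q / (p - q)) := by
      intro t
      rw [← ENNReal.rpow_mul]
      congr 1
      field_simp
    have e2 : ∀ t : T, (c t ^ q) ^ (p / q) = c t ^ p := by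
      intro t
      rw [← ENNReal.rpow_mul]
      congr 1
      field_simp
    simp only [Pi.mul_apply, e1, e2] at holder
    calc (∫⁻ t, g t ^ q * c t ^ q ∂μ) ^ (1 / q)
        ≤ ((∫⁻ t, g t ^ (p * q / (p - q)) ∂μ) ^ (1 / (p / (p - q))) *
            (∫⁻ t, c t ^ p ∂μ) ^ (1 / (p / q))) ^ (1 / q) :=
          ENNReal.rpow_le_rpow holder (by positivity)
      _ = (∫⁻ t, g t ^ (p * q / (p - q)) ∂μ) ^ ((p - q) / (p * q)) *
            (∫⁻ t, c t ^ p ∂μ) ^ (1 / p) := by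
          rw [ENNReal.mul_rpow_of_nonneg _ _ (by positivity),
            ← ENNReal.rpow_mul, ← ENNReal.rpow_mul]
          have eA : 1 / (p / (p - q)) * (1 / q) = (p - q) / (p * q) := by
            rw [one_div_div]; field_simp
          have eB : 1 / (p / q) * (1 / q) = 1 / p := by
            rw [one_div_div]; field_simp
          rw [eA, eB]
end

section
/- Let (T, μ), (S, ν) be σ-finite measure spaces, 1 ≤ q < p < ∞, κ = pq/(p−q), F ⊆ S × T measurable, λ ≪ ν × μ with density J, and P : F → ℝ measurable. If the operator M_F[f](s,t) = P(s,t) f(t) is bounded from L^p(T, μ) to L^q(F, λ), then the function t ↦ ( ∫_{F_t} |P(s,t)|^q J(s,t) dν(s) )^{1/q} belongs to L^κ(T, μ). -/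
open MeasureTheory ENNReal

lemma ennreal_iSup_rpow (κ : ℝ) (hκ : 0 < κ) (f : ℕ → ℝ≥0∞) :
    (⨆ n, f n) ^ κ = ⨆ n, f n ^ κ := by
  have h := OrderIso.map_iSup (ENNReal.orderIsoRpow κ hκ) f
  simp only [ENNReal.orderIsoRpow_apply] at h
  exact h

/-- Necessity for the mixed operator `M_F[f](s,t) = P(s,t) f(t)` with `1 ≤ q < p < ∞`:
if `M_F : L^p(T,μ) → L^q(F,λ)` is bounded (`λ ≪ ν × μ` with density `J`), then
`t ↦ (∫_{F_t} |P(s,t)|^q J(s,t) dν(s))^{1/q}` belongs to `L^κ(T,μ)`, `κ = pq/(p-q)`. -/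
theorem mixed_operator_necessity_memLkappa
    {T S : Type*} [MeasurableSpace T] [MeasurableSpace S]
    (μ : Measure T) (ν : Measure S) [SigmaFinite μ] [SigmaFinite ν]
    (p q κ : ℝ) (hq : 1 ≤ q) (hpq : q < p) (hκ : κ = p * q / (p - q))
    (F : Set (S × T)) (hF : MeasurableSet F)
    (J : S × T → ℝ≥0∞) (hJ : Measurable J)
    (lam : Measure (S × T))
    (hlam : lam = ((ν.prod μ).withDensity J).restrict F)
    (P : S × T → ℝ) (hP : Measurable P)
    (K : ℝ≥0∞) (hK : K ≠ ⊤)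
    (hbdd : ∀ f : T → ℝ, Measurable f →
      eLpNorm (fun x : S × T => P x * f x.2) (ENNReal.ofReal q) lam ≤
        K * eLpNorm f (ENNReal.ofReal p) μ) :
    ∫⁻ t, ((∫⁻ s in {s | (s, t) ∈ F},
        ENNReal.ofReal |P (s, t)| ^ q * J (s, t) ∂ν) ^ (1 / q)) ^ κ ∂μ ≠ ⊤ := by
  have hq0 : 0 < q := lt_of_lt_of_le one_pos hq
  have hp0 : 0 < p := hq0.trans hpq
  have hpq' : 0 < p - q := sub_pos.2 hpq
  have hκ0 : 0 < κ := by rw [hκ]; positivity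
  -- Notation
  set G : S × T → ℝ≥0∞ := fun x => ENNReal.ofReal |P x| ^ q * J x with hG
  have hGm : Measurable G := ((hP.abs.ennreal_ofReal).pow_const q).mul hJ
  set g : T → ℝ≥0∞ := fun t => ∫⁻ s in {s | (s, t) ∈ F}, G (s, t) ∂ν with hgdef
  have hFt : ∀ t : T, MeasurableSet {s : S | (s, t) ∈ F} := fun t =>
    measurable_prodMk_right hF
  have hg_eq : ∀ t, g t = ∫⁻ s, F.indicator G (s, t) ∂ν := by
    intro t
    simp only [hgdef]
    rw [← lintegral_indicator (hFt t)]
    refine lintegral_congr fun s => ?_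
    by_cases hst : (s, t) ∈ F <;> simp [Set.indicator, hst]
  have hgm : Measurable g := by
    have hm : Measurable (F.indicator G) := hGm.indicator hF
    have heq : g = fun t => ∫⁻ s, F.indicator G (s, t) ∂ν := funext hg_eq
    rw [heq]
    exact hm.lintegral_prod_left'
  set w : T → ℝ≥0∞ := fun t => g t ^ (1 / q) with hwdef
  have hwm : Measurable w := hgm.pow_const _
  have hwq : ∀ t, w t ^ q = g t := by
    intro t
    rw [hwdef, ← ENNReal.rpow_mul, one_div, inv_mul_cancel₀ hq0.ne', ENNReal.rpow_one]
  -- Truncations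
  set h : ℕ → T → ℝ≥0∞ := fun n t =>
    (spanningSets μ n).indicator (fun t => min (w t) (n : ℝ≥0∞)) t with hhdef
  have hhm : ∀ n, Measurable (h n) := fun n =>
    (hwm.min measurable_const).indicator (measurableSet_spanningSets μ n)
  have hh_le_w : ∀ n t, h n t ≤ w t := by
    intro n t
    by_cases ht : t ∈ spanningSets μ n
    · simp only [hhdef, Set.indicator_of_mem ht]; exact min_le_left _ _
    · simp [hhdef, Set.indicator_of_notMem ht]
  have hh_le_n : ∀ n t, h n t ≤ (n : ℝ≥0∞) := by
    intro n t
    by_cases ht : t ∈ spanningSets μ n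
    · simp only [hhdef, Set.indicator_of_mem ht]; exact min_le_right _ _
    · simp [hhdef, Set.indicator_of_notMem ht]
  have hhfin : ∀ n t, h n t ≠ ⊤ := fun n t =>
    ((hh_le_n n t).trans_lt (ENNReal.natCast_lt_top n)).ne
  have hhmono : Monotone h := by
    intro m n hmn t
    by_cases ht : t ∈ spanningSets μ m
    · have ht' : t ∈ spanningSets μ n := monotone_spanningSets μ hmn ht
      simp only [hhdef, Set.indicator_of_mem ht, Set.indicator_of_mem ht']
      exact min_le_min le_rfl (by exact_mod_cast hmn)
    · simp [hhdef, Set.indicator_of_notMem ht]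
  have hhsup : ∀ t, (⨆ n, h n t) = w t := by
    intro t
    obtain ⟨N, hN⟩ : ∃ N, t ∈ spanningSets μ N := by
      have h2 : t ∈ ⋃ i, spanningSets μ i := by rw [iUnion_spanningSets]; trivial
      exact Set.mem_iUnion.1 h2
    refine le_antisymm (iSup_le fun n => hh_le_w n t) ?_
    by_cases hw : w t = ⊤
    · rw [hw]
      rw [← ENNReal.iSup_natCast]
      refine iSup_le fun n => le_iSup_of_le (max n N) ?_
      have htm : t ∈ spanningSets μ (max n N) :=
        monotone_spanningSets μ (le_max_right n N) hN
      simp only [hhdef, Set.indicator_of_mem htm, hw]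
      rw [min_eq_right le_top]
      exact_mod_cast le_max_left n N
    · obtain ⟨n0, hn0⟩ := ENNReal.exists_nat_gt hw
      refine le_iSup_of_le (max n0 N) ?_
      have htm : t ∈ spanningSets μ (max n0 N) :=
        monotone_spanningSets μ (le_max_right n0 N) hN
      have : w t ≤ ((max n0 N : ℕ) : ℝ≥0∞) :=
        hn0.le.trans (by exact_mod_cast le_max_left n0 N)
      simp only [hhdef, Set.indicator_of_mem htm]
      rw [min_eq_left this]
  -- key exponent identities
  have hexp1 : κ / p * q + q = κ := by
    rw [hκ]; field_simp; ring
  have hexp2 : κ / p * p = κ := by field_simp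
  have hexp3 : κ / q - κ / p = 1 := by
    rw [hκ]; field_simp
  -- the per-n integrals
  set A : ℕ → ℝ≥0∞ := fun n => ∫⁻ t, h n t ^ κ ∂μ with hAdef
  have hAfin : ∀ n, A n ≠ ⊤ := by
    intro n
    have hb : ∀ t, h n t ^ κ ≤ (spanningSets μ n).indicator
        (fun _ => ((n : ℝ≥0∞)) ^ κ) t := by
      intro t
      by_cases ht : t ∈ spanningSets μ n
      · simp only [Set.indicator_of_mem ht]
        exact ENNReal.rpow_le_rpow (hh_le_n n t) hκ0.le
      · simp [hhdef, Set.indicator_of_notMem ht, ENNReal.zero_rpow_of_pos hκ0]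
    have : A n ≤ ((n : ℝ≥0∞)) ^ κ * μ (spanningSets μ n) := by
      calc A n ≤ ∫⁻ t, (spanningSets μ n).indicator (fun _ => ((n : ℝ≥0∞)) ^ κ) t ∂μ :=
            lintegral_mono hb
        _ = ((n : ℝ≥0∞)) ^ κ * μ (spanningSets μ n) := by
            rw [lintegral_indicator (measurableSet_spanningSets μ n)]
            simp [Measure.restrict_apply]
    refine ne_top_of_le_ne_top ?_ this
    exact ENNReal.mul_ne_top
      (ENNReal.rpow_ne_top_of_nonneg hκ0.le (ENNReal.natCast_ne_top n))
      (measure_spanningSets_lt_top μ n).ne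
  -- main estimate : A n ≤ K ^ κ
  have hAle : ∀ n, A n ≤ K ^ κ := by
    intro n
    set f : T → ℝ := fun t => (h n t ^ (κ / p)).toReal with hfdef
    have hfm : Measurable f := ((hhm n).pow_const _).ennreal_toReal
    have henf : ∀ t, (‖f t‖₊ : ℝ≥0∞) = h n t ^ (κ / p) := by
      intro t
      rw [← enorm_eq_nnnorm, ← ofReal_norm, Real.norm_of_nonneg ENNReal.toReal_nonneg,
        ENNReal.ofReal_toReal
          (ENNReal.rpow_ne_top_of_nonneg (by positivity) (hhfin n t))]
    have hq_ne_zero : (ENNReal.ofReal q) ≠ 0 := (ENNReal.ofReal_pos.2 hq0).ne'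
    have hp_ne_zero : (ENNReal.ofReal p) ≠ 0 := (ENNReal.ofReal_pos.2 hp0).ne'
    have hbd := hbdd f hfm
    -- compute the RHS eLpNorm
    have hRHS : eLpNorm f (ENNReal.ofReal p) μ = A n ^ (1 / p) := by
      rw [eLpNorm_eq_lintegral_rpow_enorm_toReal hp_ne_zero ENNReal.ofReal_ne_top,
        ENNReal.toReal_ofReal hp0.le]
      congr 1
      refine lintegral_congr fun t => ?_
      rw [enorm_eq_nnnorm, henf, ← ENNReal.rpow_mul, hexp2]
    -- compute the LHS eLpNorm
    have hLHS : eLpNorm (fun x : S × T => P x * f x.2) (ENNReal.ofReal q) lam =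
        (∫⁻ t, h n t ^ (κ / p * q) * g t ∂μ) ^ (1 / q) := by
      rw [eLpNorm_eq_lintegral_rpow_enorm_toReal hq_ne_zero ENNReal.ofReal_ne_top,
        ENNReal.toReal_ofReal hq0.le]
      congr 1
      simp only [enorm_eq_nnnorm]
      have hintm : Measurable fun x : S × T => ((‖P x * f x.2‖₊ : ℝ≥0∞)) ^ q :=
        (((hP.mul (hfm.comp measurable_snd)).nnnorm).coe_nnreal_ennreal).pow_const q
      rw [hlam, restrict_withDensity hF,
        lintegral_withDensity_eq_lintegral_mul _ hJ hintm]
      simp only [Pi.mul_apply]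
      rw [← lintegral_indicator hF,
        lintegral_prod_symm'
          (F.indicator (fun x : S × T => J x * ((‖P x * f x.2‖₊ : ℝ≥0∞)) ^ q))
          ((hJ.mul hintm).indicator hF)]
      refine lintegral_congr fun t => ?_
      have hpt : ∀ s : S, F.indicator (fun x => J x * ((‖P x * f x.2‖₊ : ℝ≥0∞)) ^ q) (s, t)
          = {s : S | (s, t) ∈ F}.indicator
              (fun s => h n t ^ (κ / p * q) * G (s, t)) s := by
        intro s
        by_cases hst : (s, t) ∈ F
        · simp only [Set.indicator_of_mem, hst, Set.indicator, Set.mem_setOf_eq, if_pos hst,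
            Pi.mul_apply]
          rw [← enorm_eq_nnnorm, ← ofReal_norm, Real.norm_eq_abs, abs_mul,
            ENNReal.ofReal_mul (abs_nonneg _),
            ENNReal.mul_rpow_of_nonneg _ _ hq0.le]
          have : ENNReal.ofReal |f t| = h n t ^ (κ / p) := by
            rw [← Real.norm_eq_abs, ofReal_norm, enorm_eq_nnnorm, henf]
          rw [this, ← ENNReal.rpow_mul, hG]
          ring_nf
        · simp only [Set.indicator, Set.mem_setOf_eq, if_neg hst, hst]
          simp [hst]
      have hGt : Measurable fun s : S => G (s, t) := hGm.comp measurable_prodMk_right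
      rw [lintegral_congr hpt, lintegral_indicator (hFt t),
        lintegral_const_mul _ hGt]
    -- the lower bound for the LHS integrand
    have hlow : A n ^ (1 / q) ≤ (∫⁻ t, h n t ^ (κ / p * q) * g t ∂μ) ^ (1 / q) := by
      refine ENNReal.rpow_le_rpow (lintegral_mono fun t => ?_) (by positivity)
      by_cases hz : h n t = 0
      · rw [hz, ENNReal.zero_rpow_of_pos hκ0]; exact zero_le
      · have h1 : h n t ^ q ≤ g t := by
          rw [← hwq t]
          exact ENNReal.rpow_le_rpow (hh_le_w n t) hq0.le
        calc h n t ^ κ = h n t ^ (κ / p * q) * h n t ^ q := by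
              rw [← ENNReal.rpow_add _ _ hz (hhfin n t), hexp1]
          _ ≤ h n t ^ (κ / p * q) * g t :=
              mul_le_mul_right h1 _
    have hmain : A n ^ (1 / q) ≤ K * A n ^ (1 / p) := by
      calc A n ^ (1 / q) ≤ (∫⁻ t, h n t ^ (κ / p * q) * g t ∂μ) ^ (1 / q) := hlow
        _ = eLpNorm (fun x : S × T => P x * f x.2) (ENNReal.ofReal q) lam := hLHS.symm
        _ ≤ K * eLpNorm f (ENNReal.ofReal p) μ := hbd
        _ = K * A n ^ (1 / p) := by rw [hRHS]
    -- conclude A n ≤ K ^ κ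
    by_cases hA0 : A n = 0
    · rw [hA0]; exact zero_le
    · have hstep : A n ^ (κ / q) ≤ K ^ κ * A n ^ (κ / p) := by
        have := ENNReal.rpow_le_rpow hmain hκ0.le
        rwa [ENNReal.mul_rpow_of_nonneg _ _ hκ0.le, ← ENNReal.rpow_mul,
          ← ENNReal.rpow_mul, one_div_mul_eq_div, one_div_mul_eq_div] at this
      have hAq : A n ^ (κ / q) = A n * A n ^ (κ / p) := by
        have hqe : κ / q = 1 + κ / p := by linarith [hexp3]
        rw [hqe, ENNReal.rpow_add _ _ hA0 (hAfin n), ENNReal.rpow_one]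
      have hne0 : A n ^ (κ / p) ≠ 0 :=
        (ENNReal.rpow_pos (pos_iff_ne_zero.2 hA0) (hAfin n)).ne'
      have hnetop : A n ^ (κ / p) ≠ ⊤ :=
        ENNReal.rpow_ne_top_of_nonneg (by positivity) (hAfin n)
      exact (ENNReal.mul_le_mul_iff_left hne0 hnetop).1 (hAq ▸ hstep)
  -- conclusion via monotone convergence
  refine ne_top_of_le_ne_top (ENNReal.rpow_ne_top_of_nonneg hκ0.le hK) ?_
  calc ∫⁻ t, ((∫⁻ s in {s | (s, t) ∈ F},
        ENNReal.ofReal |P (s, t)| ^ q * J (s, t) ∂ν) ^ (1 / q)) ^ κ ∂μ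
      = ∫⁻ t, w t ^ κ ∂μ := by simp only [hwdef, hgdef, hG]
    _ = ∫⁻ t, ⨆ n, h n t ^ κ ∂μ := by
        refine lintegral_congr fun t => ?_
        rw [← hhsup t, ennreal_iSup_rpow κ hκ0]
    _ = ⨆ n, A n := by
        rw [hAdef]
        exact lintegral_iSup (fun n => (hhm n).pow_const κ)
          (fun m n hmn t => ENNReal.rpow_le_rpow (hhmono hmn t) hκ0.le)
    _ ≤ K ^ κ := iSup_le hAle
end

section
/- Let (T, μ), (S, ν) be σ-finite measure spaces, ψ : S → T measurable and injective with measurable inverse on its image, 1 ≤ q ≤ p < ∞, ν ∘ ψ⁻¹ ≪ μ with density J, and let ρ : T → [0,∞) be measurable. Then the weighted composition operator M_ψ[f](s) = ρ(ψ(s)) f(ψ(s)) is bounded from L^p(T, μ) to L^q(S, ν) if and only if ρ · J^{1/q} ∈ L^κ(T, μ), where κ = pq/(p−q) for p > q and κ = ∞ for p = q. -/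
open MeasureTheory ENNReal

section Aux

variable {T : Type*} [MeasurableSpace T]

/-- Characterization of boundedness of the multiplication operator `f ↦ w·f`
from `L^p` to `L^q` on a σ-finite measure space, stated at the level of lintegrals. -/
lemma mult_op_bounded_iff (μ : Measure T) [SigmaFinite μ]
    (p q : ℝ) (hq : 1 ≤ q) (hqp : q ≤ p) (w : T → ℝ≥0∞) (hw : Measurable w) :
    (∃ K : ℝ≥0∞, K ≠ ⊤ ∧ ∀ f : T → ℝ, Measurable f →
        (∫⁻ t, w t ^ q * (‖f t‖₊ : ℝ≥0∞) ^ q ∂μ) ^ (1/q) ≤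
          K * (∫⁻ t, (‖f t‖₊ : ℝ≥0∞) ^ p ∂μ) ^ (1/p))
      ↔ memLkappa μ p q w := by
  have hq0 : (0:ℝ) < q := lt_of_lt_of_le one_pos hq
  have hq0' : q ≠ 0 := hq0.ne'
  have hp0 : (0:ℝ) < p := lt_of_lt_of_le hq0 hqp
  have h1q0 : (0:ℝ) ≤ 1/q := by positivity
  by_cases hpq : p = q
  · have h2 : q = p := hpq.symm
    subst h2
    simp only [memLkappa, if_pos rfl]
    constructor
    · rintro ⟨K, hK, hb⟩
      intro htop
      apply hK
      apply eq_top_of_forall_nnreal_le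
      intro r
      -- it suffices to show (n : ℝ≥0∞) ≤ K for every n : ℕ
      have hKlt : ∀ n : ℕ, (n:ℝ≥0∞) ≤ K := by
        intro n
        have hBne : μ {t | (n:ℝ≥0∞) < w t} ≠ 0 := by
          intro h0
          have hae : ∀ᵐ t ∂μ, w t ≤ (n:ℝ≥0∞) := by
            rw [ae_iff]; simpa [not_lt, not_le] using h0
          have := essSup_le_of_ae_le (μ := μ) (f := w) (n:ℝ≥0∞) hae
          rw [htop, top_le_iff] at this
          exact (ENNReal.natCast_ne_top n) this
        set B := {t | (n:ℝ≥0∞) < w t} with hB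
        have hBmeas : MeasurableSet B := measurableSet_lt measurable_const hw
        have hex : ∃ m, μ (B ∩ spanningSets μ m) ≠ 0 := by
          by_contra hall
          push_neg at hall
          apply hBne
          have hU : B = ⋃ m, B ∩ spanningSets μ m := by
            rw [← Set.inter_iUnion, iUnion_spanningSets, Set.inter_univ]
          rw [hU]
          exact measure_iUnion_null fun m => hall m
        obtain ⟨m, hm⟩ := hex
        set A := B ∩ spanningSets μ m with hA
        have hAmeas : MeasurableSet A := hBmeas.inter (measurableSet_spanningSets μ m)
        have hAfin : μ A < ⊤ :=
          lt_of_le_of_lt (measure_mono Set.inter_subset_right) (measure_spanningSets_lt_top μ m)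
        set f : T → ℝ := A.indicator (fun _ => 1) with hf
        have hfmeas : Measurable f := measurable_const.indicator hAmeas
        have hnq : ∀ t, (‖f t‖₊ : ℝ≥0∞) ^ q = A.indicator (fun _ => 1) t := by
          intro t; by_cases ht : t ∈ A <;>
            simp [hf, ht, ENNReal.zero_rpow_of_pos hq0]
        have hI : ∫⁻ t, (‖f t‖₊:ℝ≥0∞)^q ∂μ = μ A := by
          simp_rw [hnq]
          rw [lintegral_indicator hAmeas, setLIntegral_const, one_mul]
        have hlow : (n:ℝ≥0∞)^q * μ A ≤ ∫⁻ t, w t ^ q * (‖f t‖₊:ℝ≥0∞)^q ∂μ := by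
          have hpt : ∀ t, A.indicator (fun _ => (n:ℝ≥0∞)^q) t ≤ w t ^ q * (‖f t‖₊:ℝ≥0∞)^q := by
            intro t; by_cases ht : t ∈ A
            · rw [Set.indicator_of_mem ht, hnq t, Set.indicator_of_mem ht, mul_one]
              exact ENNReal.rpow_le_rpow (le_of_lt ht.1) hq0.le
            · simp [Set.indicator_of_notMem ht]
          calc (n:ℝ≥0∞)^q * μ A
              = ∫⁻ t, A.indicator (fun _ => (n:ℝ≥0∞)^q) t ∂μ := by
                rw [lintegral_indicator hAmeas, setLIntegral_const]
            _ ≤ _ := lintegral_mono hpt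
        have hb' := hb f hfmeas
        rw [hI] at hb'
        have hcomb : ((n:ℝ≥0∞)^q * μ A)^(1/q) ≤ K * (μ A)^(1/q) :=
          le_trans (ENNReal.rpow_le_rpow hlow h1q0) hb'
        rw [ENNReal.mul_rpow_of_nonneg _ _ h1q0, ← ENNReal.rpow_mul,
          mul_one_div_cancel hq0', ENNReal.rpow_one] at hcomb
        have hme0 : (μ A)^(1/q) ≠ 0 := by
          intro h0
          rcases ENNReal.rpow_eq_zero_iff.mp h0 with ⟨h, _⟩ | ⟨h, hneg⟩
          · exact hm h
          · linarith
        have hmet : (μ A)^(1/q) ≠ ⊤ := ENNReal.rpow_ne_top_of_nonneg h1q0 hAfin.ne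
        exact (ENNReal.mul_le_mul_iff_left hme0 hmet).mp hcomb
      obtain ⟨n, hn⟩ := exists_nat_ge r
      calc (r:ℝ≥0∞) ≤ (n:ℝ≥0∞) := by exact_mod_cast hn
        _ ≤ K := hKlt n
    · intro h
      refine ⟨essSup w μ, h, fun f hf => ?_⟩
      have h1 : ∫⁻ t, w t ^ q * (‖f t‖₊:ℝ≥0∞) ^ q ∂μ
          ≤ (essSup w μ)^q * ∫⁻ t, (‖f t‖₊:ℝ≥0∞)^q ∂μ := by
        rw [← lintegral_const_mul _ (hf.nnnorm.coe_nnreal_ennreal.pow_const q)]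
        refine lintegral_mono_ae ?_
        filter_upwards [ENNReal.ae_le_essSup w] with t ht
        exact mul_le_mul_left (ENNReal.rpow_le_rpow ht hq0.le) _
      calc (∫⁻ t, w t ^ q * (‖f t‖₊:ℝ≥0∞) ^ q ∂μ) ^ (1/q)
          ≤ ((essSup w μ)^q * ∫⁻ t, (‖f t‖₊:ℝ≥0∞)^q ∂μ) ^ (1/q) :=
            ENNReal.rpow_le_rpow h1 h1q0
        _ = essSup w μ * (∫⁻ t, (‖f t‖₊:ℝ≥0∞)^q ∂μ) ^ (1/q) := by
            rw [ENNReal.mul_rpow_of_nonneg _ _ h1q0, ← ENNReal.rpow_mul,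
              mul_one_div_cancel hq0', ENNReal.rpow_one]
  · -- q < p
    have hlt : q < p := lt_of_le_of_ne hqp (fun h => hpq h.symm)
    have hsub : (0:ℝ) < p - q := by linarith
    set κ : ℝ := p * q / (p - q) with hκ
    have hκpos : (0:ℝ) < κ := by positivity
    have hκ0 : (0:ℝ) ≤ κ := hκpos.le
    have hκq : q ≤ κ := by
      rw [hκ, le_div_iff₀ hsub]; nlinarith
    have hκ1 : (1:ℝ) ≤ κ := le_trans hq hκq
    simp only [memLkappa, if_neg hpq]
    constructor
    · rintro ⟨K, hK, hb⟩
      -- truncation argument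
      have hmeasg : ∀ n : ℕ, Measurable fun t => (w t ⊓ (n:ℝ≥0∞))^κ :=
        fun n => (hw.min measurable_const).pow_const κ
      set g : ℕ → T → ℝ≥0∞ :=
        fun n => (spanningSets μ n).indicator (fun t => (w t ⊓ (n:ℝ≥0∞))^κ) with hg
      have hgmeas : ∀ n, Measurable (g n) :=
        fun n => (hmeasg n).indicator (measurableSet_spanningSets μ n)
      have key : ∀ n : ℕ, ∫⁻ t, g n t ∂μ ≤ K ^ κ := by
        intro n
        set I := ∫⁻ t, g n t ∂μ with hIdef
        have hmin_ne_top : ∀ t, w t ⊓ (n:ℝ≥0∞) ≠ ⊤ :=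
          fun t => ne_top_of_le_ne_top (ENNReal.natCast_ne_top n) (min_le_right _ _)
        have hIfin : I ≠ ⊤ := by
          have : I ≤ (n:ℝ≥0∞)^κ * μ (spanningSets μ n) := by
            rw [hIdef, hg]
            simp only
            rw [lintegral_indicator (measurableSet_spanningSets μ n)]
            calc ∫⁻ t in spanningSets μ n, (w t ⊓ (n:ℝ≥0∞))^κ ∂μ
                ≤ ∫⁻ _ in spanningSets μ n, (n:ℝ≥0∞)^κ ∂μ :=
                  lintegral_mono fun t => ENNReal.rpow_le_rpow (min_le_right _ _) hκ0
              _ = (n:ℝ≥0∞)^κ * μ (spanningSets μ n) := setLIntegral_const _ _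
          exact ne_top_of_le_ne_top
            (ENNReal.mul_ne_top (ENNReal.rpow_ne_top_of_nonneg hκ0 (ENNReal.natCast_ne_top n))
              (measure_spanningSets_lt_top μ n).ne) this
        set f : T → ℝ :=
          (spanningSets μ n).indicator (fun t => ((w t ⊓ (n:ℝ≥0∞))^(κ/p)).toReal) with hfdef
        have hfmeas : Measurable f :=
          (((hw.min measurable_const).pow_const (κ/p)).ennreal_toReal).indicator
            (measurableSet_spanningSets μ n)
        have hnorm : ∀ t, (‖f t‖₊:ℝ≥0∞) =
            (spanningSets μ n).indicator (fun t => (w t ⊓ (n:ℝ≥0∞))^(κ/p)) t := by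
          intro t; by_cases ht : t ∈ spanningSets μ n
          · rw [hfdef]
            simp only [Set.indicator_of_mem ht]
            rw [← enorm_eq_nnnorm, Real.enorm_eq_ofReal ENNReal.toReal_nonneg, ENNReal.ofReal_toReal]
            exact ENNReal.rpow_ne_top_of_nonneg (by positivity) (hmin_ne_top t)
          · rw [hfdef]; simp [Set.indicator_of_notMem ht]
        have hfp : ∫⁻ t, (‖f t‖₊:ℝ≥0∞)^p ∂μ = I := by
          rw [hIdef]
          refine lintegral_congr fun t => ?_
          rw [hnorm t, hg]
          by_cases ht : t ∈ spanningSets μ n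
          · simp only [Set.indicator_of_mem ht]
            rw [← ENNReal.rpow_mul, div_mul_cancel₀ κ hp0.ne']
          · simp [Set.indicator_of_notMem ht, ENNReal.zero_rpow_of_pos hp0]
        have hfq : I ≤ ∫⁻ t, w t ^ q * (‖f t‖₊:ℝ≥0∞)^q ∂μ := by
          rw [hIdef]
          refine lintegral_mono fun t => ?_
          rw [hnorm t, hg]
          by_cases ht : t ∈ spanningSets μ n
          · simp only [Set.indicator_of_mem ht]
            have hexp : κ = q + (κ/p) * q := by
              rw [hκ]; field_simp; try ring
            calc (w t ⊓ (n:ℝ≥0∞))^κ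
                = (w t ⊓ (n:ℝ≥0∞))^q * (w t ⊓ (n:ℝ≥0∞))^((κ/p)*q) := by
                  rw [← ENNReal.rpow_add_of_nonneg _ _ hq0.le (by positivity), ← hexp]
              _ ≤ w t ^ q * ((w t ⊓ (n:ℝ≥0∞))^(κ/p))^q := by
                  rw [ENNReal.rpow_mul]
                  exact mul_le_mul_left (ENNReal.rpow_le_rpow (min_le_left _ _) hq0.le) _
          · simp [Set.indicator_of_notMem ht]
        have hfin : I ^ (1/q) ≤ K * I ^ (1/p) := by
          calc I ^ (1/q) ≤ (∫⁻ t, w t ^ q * (‖f t‖₊:ℝ≥0∞)^q ∂μ) ^ (1/q) :=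
                ENNReal.rpow_le_rpow hfq h1q0
            _ ≤ K * (∫⁻ t, (‖f t‖₊:ℝ≥0∞)^p ∂μ) ^ (1/p) := hb f hfmeas
            _ = K * I ^ (1/p) := by rw [hfp]
        by_cases hI0 : I = 0
        · rw [hI0]; exact zero_le
        have hIp0 : I ^ (1/p) ≠ 0 := by
          intro h0
          rcases ENNReal.rpow_eq_zero_iff.mp h0 with ⟨h, _⟩ | ⟨h, _⟩
          · exact hI0 h
          · exact hIfin h
        have hIpt : I ^ (1/p) ≠ ⊤ := ENNReal.rpow_ne_top_of_nonneg (by positivity) hIfin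
        have hsplit : I ^ (1/q) = I ^ (1/κ) * I ^ (1/p) := by
          rw [← ENNReal.rpow_add _ _ hI0 hIfin]
          congr 1
          rw [hκ]; field_simp; try ring
        rw [hsplit] at hfin
        have hIκ : I ^ (1/κ) ≤ K := (ENNReal.mul_le_mul_iff_left hIp0 hIpt).mp hfin
        calc I = (I ^ (1/κ)) ^ κ := by
              rw [← ENNReal.rpow_mul, one_div_mul_cancel hκpos.ne', ENNReal.rpow_one]
          _ ≤ K ^ κ := ENNReal.rpow_le_rpow hIκ hκ0
      have hmono : Monotone g := by
        intro a b hab t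
        by_cases ht : t ∈ spanningSets μ a
        · rw [hg]
          simp only [Set.indicator_of_mem ht,
            Set.indicator_of_mem (monotone_spanningSets μ hab ht)]
          exact ENNReal.rpow_le_rpow (min_le_min le_rfl (by exact_mod_cast Nat.cast_le.mpr hab)) hκ0
        · rw [hg]; simp [Set.indicator_of_notMem ht]
      have hsup : ∀ t, ⨆ n, g n t = w t ^ κ := by
        intro t
        have htN : ∃ N, t ∈ spanningSets μ N := by
          have h1 : t ∈ ⋃ n, spanningSets μ n := by
            rw [iUnion_spanningSets]; trivial
          exact Set.mem_iUnion.mp h1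
        obtain ⟨N, hN⟩ := htN
        apply le_antisymm
        · refine iSup_le fun n => ?_
          by_cases ht : t ∈ spanningSets μ n
          · rw [hg]; simp only [Set.indicator_of_mem ht]
            exact ENNReal.rpow_le_rpow (min_le_left _ _) hκ0
          · rw [hg]; simp [Set.indicator_of_notMem ht]
        · by_cases hwt : w t = ⊤
          · rw [hwt, ENNReal.top_rpow_of_pos hκpos, top_le_iff]
            apply eq_top_of_forall_nnreal_le
            intro r
            set m := max N (⌈(r:ℝ)⌉₊ + 1) with hm
            have hmmem : t ∈ spanningSets μ m := monotone_spanningSets μ (le_max_left _ _) hN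
            have h1m : (1:ℝ≥0∞) ≤ (m:ℝ≥0∞) := by
              have : 1 ≤ m := le_trans (Nat.le_add_left 1 _) (le_max_right _ _)
              exact_mod_cast this
            calc (r:ℝ≥0∞) ≤ ((⌈(r:ℝ)⌉₊ + 1 : ℕ) : ℝ≥0∞) := by
                  have h2 : (r:ℝ) ≤ ((⌈(r:ℝ)⌉₊ + 1 : ℕ) : ℝ) := by
                    push_cast; linarith [Nat.le_ceil (r:ℝ)]
                  calc (r:ℝ≥0∞) = ENNReal.ofReal (r:ℝ) := by
                        rw [ENNReal.ofReal_coe_nnreal]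
                    _ ≤ ENNReal.ofReal ((⌈(r:ℝ)⌉₊ + 1 : ℕ) : ℝ) := ENNReal.ofReal_le_ofReal h2
                    _ = ((⌈(r:ℝ)⌉₊ + 1 : ℕ) : ℝ≥0∞) := by
                        rw [ENNReal.ofReal_natCast]
              _ ≤ (m:ℝ≥0∞) := by exact_mod_cast Nat.cast_le.mpr (le_max_right _ _)
              _ = (m:ℝ≥0∞) ^ (1:ℝ) := (ENNReal.rpow_one _).symm
              _ ≤ (m:ℝ≥0∞) ^ κ := ENNReal.rpow_le_rpow_of_exponent_le h1m hκ1
              _ = (w t ⊓ (m:ℝ≥0∞)) ^ κ := by rw [hwt, top_inf_eq]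
              _ = g m t := by rw [hg]; simp only [Set.indicator_of_mem hmmem]
              _ ≤ ⨆ n, g n t := le_iSup (fun n => g n t) m
          · obtain ⟨M, hM⟩ := ENNReal.exists_nat_gt hwt
            set m := max N M with hm
            have hmmem : t ∈ spanningSets μ m := monotone_spanningSets μ (le_max_left _ _) hN
            have hle : w t ≤ (m:ℝ≥0∞) :=
              hM.le.trans (by exact_mod_cast Nat.cast_le.mpr (le_max_right _ _))
            have : g m t = w t ^ κ := by
              rw [hg]; simp only [Set.indicator_of_mem hmmem]
              rw [inf_eq_left.mpr hle]
            exact this ▸ le_iSup (fun n => g n t) m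
      have hκint : ∫⁻ t, w t ^ κ ∂μ ≤ K ^ κ := by
        calc ∫⁻ t, w t ^ κ ∂μ = ∫⁻ t, ⨆ n, g n t ∂μ :=
              lintegral_congr fun t => (hsup t).symm
          _ = ⨆ n, ∫⁻ t, g n t ∂μ := lintegral_iSup hgmeas hmono
          _ ≤ K ^ κ := iSup_le key
      exact ne_top_of_le_ne_top (ENNReal.rpow_ne_top_of_nonneg hκ0 hK) hκint
    · intro hfin
      refine ⟨(∫⁻ t, w t ^ κ ∂μ) ^ (1/κ),
        ENNReal.rpow_ne_top_of_nonneg (by positivity) hfin, fun f hf => ?_⟩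
      have hconj : Real.HolderConjugate (p/(p-q)) (p/q) := by
        constructor
        · rw [inv_div, inv_div, ← add_div, sub_add_cancel, div_self hp0.ne', inv_one]
        · exact div_pos hp0 hsub
        · exact div_pos hp0 hq0
      have hhold := ENNReal.lintegral_mul_le_Lp_mul_Lq μ hconj
        ((hw.pow_const q).aemeasurable) ((hf.nnnorm.coe_nnreal_ennreal.pow_const q).aemeasurable)
      simp only [Pi.mul_apply, ← ENNReal.rpow_mul] at hhold
      have e1 : q * (p/(p-q)) = κ := by rw [hκ]; field_simp; try ring
      have e2 : q * (p/q) = p := by field_simp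
      have e3 : (1:ℝ)/(p/(p-q)) = (p-q)/p := one_div_div _ _
      have e4 : (1:ℝ)/(p/q) = q/p := one_div_div _ _
      rw [e1, e2, e3, e4] at hhold
      have e5 : (p-q)/p * (1/q) = 1/κ := by rw [hκ]; field_simp; try ring
      have e6 : q/p * (1/q) = 1/p := by field_simp; try ring
      calc (∫⁻ t, w t ^ q * (‖f t‖₊:ℝ≥0∞) ^ q ∂μ) ^ (1/q)
          ≤ ((∫⁻ t, w t ^ κ ∂μ) ^ ((p-q)/p) * (∫⁻ t, (‖f t‖₊:ℝ≥0∞) ^ p ∂μ) ^ (q/p)) ^ (1/q) :=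
            ENNReal.rpow_le_rpow hhold h1q0
        _ = (∫⁻ t, w t ^ κ ∂μ) ^ (1/κ) * (∫⁻ t, (‖f t‖₊:ℝ≥0∞) ^ p ∂μ) ^ (1/p) := by
            rw [ENNReal.mul_rpow_of_nonneg _ _ h1q0, ← ENNReal.rpow_mul, ← ENNReal.rpow_mul,
              e5, e6]

end Aux

/-- For an injective `ψ` with measurable inverse on its image and `ν ∘ ψ⁻¹ ≪ μ` with
density `J`, the weighted composition operator `M_ψ[f](s) = ρ(ψ(s)) f(ψ(s))` is bounded
from `L^p(T,μ)` to `L^q(S,ν)` iff `ρ·J^{1/q} ∈ L^κ(T,μ)` (`κ = pq/(p-q)` for `p > q`,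
`κ = ∞` for `p = q`). -/
theorem weighted_composition_injective_bounded_iff
    {T S : Type*} [MeasurableSpace T] [MeasurableSpace S]
    (μ : Measure T) (ν : Measure S) [SigmaFinite μ] [SigmaFinite ν]
    (p q : ℝ) (hq : 1 ≤ q) (hqp : q ≤ p)
    (ψ : S → T) (hψ : MeasurableEmbedding ψ)
    (habs : Measure.map ψ ν ≪ μ)
    (J : T → ℝ≥0∞) (hJ : J = (Measure.map ψ ν).rnDeriv μ)
    (ρ : T → ℝ) (hρ : Measurable ρ) (hρ0 : ∀ t, 0 ≤ ρ t) :
    (∃ K : ℝ≥0∞, K ≠ ⊤ ∧ ∀ f : T → ℝ, Measurable f →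
        eLpNorm (fun s => ρ (ψ s) * f (ψ s)) (ENNReal.ofReal q) ν ≤
          K * eLpNorm f (ENNReal.ofReal p) μ)
      ↔ memLkappa μ p q (fun t => ENNReal.ofReal (ρ t) * J t ^ (1 / q)) := by
  have hq0 : (0:ℝ) < q := lt_of_lt_of_le one_pos hq
  have hp0 : (0:ℝ) < p := lt_of_lt_of_le hq0 hqp
  set w : T → ℝ≥0∞ := fun t => ENNReal.ofReal (ρ t) * J t ^ (1 / q) with hw
  have hJm : Measurable J := hJ ▸ Measure.measurable_rnDeriv _ _
  have hwm : Measurable w := hρ.ennreal_ofReal.mul (hJm.pow_const _)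
  haveI : SigmaFinite (Measure.map ψ ν) := hψ.sigmaFinite_map
  have hmap : μ.withDensity J = Measure.map ψ ν := by
    rw [hJ]; exact Measure.withDensity_rnDeriv_eq _ _ habs
  -- change of variables
  have lemA : ∀ f : T → ℝ, Measurable f →
      eLpNorm (fun s => ρ (ψ s) * f (ψ s)) (ENNReal.ofReal q) ν =
        (∫⁻ t, w t ^ q * (‖f t‖₊ : ℝ≥0∞) ^ q ∂μ) ^ (1/q) := by
    intro f hf
    rw [eLpNorm_eq_lintegral_rpow_enorm_toReal
      (by simp [ENNReal.ofReal_eq_zero]; linarith) ENNReal.ofReal_ne_top,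
      ENNReal.toReal_ofReal hq0.le]
    congr 1
    have hmeas : Measurable fun t => (ENNReal.ofReal (ρ t) * (‖f t‖₊:ℝ≥0∞))^q :=
      (hρ.ennreal_ofReal.mul hf.nnnorm.coe_nnreal_ennreal).pow_const q
    calc ∫⁻ s, (‖ρ (ψ s) * f (ψ s)‖₊:ℝ≥0∞)^q ∂ν
        = ∫⁻ s, (ENNReal.ofReal (ρ (ψ s)) * (‖f (ψ s)‖₊:ℝ≥0∞))^q ∂ν := by
          refine lintegral_congr fun s => ?_
          rw [nnnorm_mul, ENNReal.coe_mul, ← enorm_eq_nnnorm, Real.enorm_eq_ofReal (hρ0 (ψ s))]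
      _ = ∫⁻ t, (ENNReal.ofReal (ρ t) * (‖f t‖₊:ℝ≥0∞))^q ∂(Measure.map ψ ν) :=
          (hψ.lintegral_map (fun t => (ENNReal.ofReal (ρ t) * (‖f t‖₊:ℝ≥0∞))^q)).symm
      _ = ∫⁻ t, (ENNReal.ofReal (ρ t) * (‖f t‖₊:ℝ≥0∞))^q ∂(μ.withDensity J) := by rw [hmap]
      _ = ∫⁻ t, (J * fun t => (ENNReal.ofReal (ρ t) * (‖f t‖₊:ℝ≥0∞))^q) t ∂μ :=
          lintegral_withDensity_eq_lintegral_mul μ hJm hmeas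
      _ = ∫⁻ t, w t ^ q * (‖f t‖₊:ℝ≥0∞) ^ q ∂μ := by
          refine lintegral_congr fun t => ?_
          simp only [Pi.mul_apply, hw]
          have hJq : (J t ^ (1/q))^q = J t := by
            rw [← ENNReal.rpow_mul, one_div, inv_mul_cancel₀ hq0.ne', ENNReal.rpow_one]
          rw [ENNReal.mul_rpow_of_nonneg (ENNReal.ofReal (ρ t)) _ hq0.le,
            ENNReal.mul_rpow_of_nonneg (ENNReal.ofReal (ρ t)) _ hq0.le, hJq]
          ring
  have lemB : ∀ f : T → ℝ,
      eLpNorm f (ENNReal.ofReal p) μ = (∫⁻ t, (‖f t‖₊ : ℝ≥0∞) ^ p ∂μ) ^ (1/p) := by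
    intro f
    rw [eLpNorm_eq_lintegral_rpow_enorm_toReal
      (by simp [ENNReal.ofReal_eq_zero]; linarith) ENNReal.ofReal_ne_top,
      ENNReal.toReal_ofReal hp0.le]
    simp only [enorm_eq_nnnorm]
  constructor
  · rintro ⟨K, hK, hb⟩
    exact (mult_op_bounded_iff μ p q hq hqp w hwm).mp
      ⟨K, hK, fun f hf => by rw [← lemA f hf, ← lemB f]; exact hb f hf⟩
  · intro h
    obtain ⟨K, hK, hb⟩ := (mult_op_bounded_iff μ p q hq hqp w hwm).mpr h
    exact ⟨K, hK, fun f hf => by rw [lemA f hf, lemB f]; exact hb f hf⟩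
end
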